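/- arXiv:2409.18900 — 3 statements merged into one kernel-verified Lean document; each statement's English description precedes it below -/
import Mathlib

section
/- Let f ∈ 𝒮(ℝ²) (a Schwartz function) have zero mean over every circle centered at the origin. Then ∫_{ℝ²} f̂ χ = 0 for every radial χ ∈ 𝒮(ℝ²), and consequently the Fourier transform f̂ also has zero mean over every circle centered at the origin, i.e. ∫₀^{2π} f̂(ρ cos β, ρ sin β) dβ = 0 for every ρ > 0. -/
noncomputable section

open MeasureTheory Real Filter Topology Set

namespace SQG

/-- We identify the plane `ℝ²` with `ℝ × ℝ`. -/
abbrev Plane : Type := ℝ × ℝ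

/-- The Euclidean norm on the plane. -/
def en (x : Plane) : ℝ := Real.sqrt (x.1 ^ 2 + x.2 ^ 2)

/-- Counterclockwise rotation by the angle `φ`. -/
def rot (φ : ℝ) (x : Plane) : Plane :=
  (Real.cos φ * x.1 - Real.sin φ * x.2, Real.sin φ * x.1 + Real.cos φ * x.2)

/-- Rotation by 90 degrees: `(a,b)^⊥ = (-b,a)`. -/
def perp (x : Plane) : Plane := (-x.2, x.1)

/-- The open ball of radius `r` centered at the origin (Euclidean norm). -/
def ball2 (r : ℝ) : Set Plane := {x | en x < r}

/-- Euclidean dot product on the plane. -/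
def dot (a b : Plane) : ℝ := a.1 * b.1 + a.2 * b.2

/-- `P`-fold symmetry. -/
def PFoldSymmetric {α : Type*} (P : ℕ) (f : Plane → α) : Prop :=
  ∀ x, f (rot (2 * π / P) x) = f x

/-- Odd-odd symmetry. -/
def OddOdd (f : Plane → ℝ) : Prop :=
  (∀ x : Plane, f (-x.1, x.2) = -f x) ∧ (∀ x : Plane, f (x.1, -x.2) = -f x)

/-- The gradient of a scalar function. -/
def grad (f : Plane → ℝ) (x : Plane) : Plane :=
  (fderiv ℝ f x (1, 0), fderiv ℝ f x (0, 1))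

/-- First order partial derivatives. -/
def pd (i : Fin 2) (f : Plane → ℝ) : Plane → ℝ :=
  fun x => fderiv ℝ f x (if i = 0 then (1, 0) else (0, 1))

/-- The iterated partial derivative `∂₁^a ∂₂^b f`. -/
def pdm (a b : ℕ) (f : Plane → ℝ) : Plane → ℝ := (pd 0)^[a] ((pd 1)^[b] f)

/-- Supremum of the absolute value. -/
def supAbs (f : Plane → ℝ) : ℝ := ⨆ x : Plane, |f x|

/-- The `C^k` norm: `∑_{|γ| ≤ k} sup |D^γ f|`. -/
def cknorm (k : ℕ) (f : Plane → ℝ) : ℝ :=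
  ∑ a ∈ Finset.range (k + 1), ∑ b ∈ Finset.range (k + 1 - a), supAbs (pdm a b f)

/-- The `α`-Hölder seminorm. -/
def holderSemi (α : ℝ) (f : Plane → ℝ) : ℝ :=
  ⨆ p : Plane × Plane, |f p.1 - f p.2| / en (p.1 - p.2) ^ α

/-- The `C^{k,α}` norm (with the top order Hölder seminorms summed). -/
def ckanorm (k : ℕ) (α : ℝ) (f : Plane → ℝ) : ℝ :=
  cknorm k f + ∑ a ∈ Finset.range (k + 1), holderSemi α (pdm a (k - a) f)

/-- The `C^k` norm of a vector field. -/
def cknormV (k : ℕ) (u : Plane → Plane) : ℝ :=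
  cknorm k (fun x => (u x).1) + cknorm k (fun x => (u x).2)

/-- The `C^{k,α}` norm of a vector field. -/
def ckanormV (k : ℕ) (α : ℝ) (u : Plane → Plane) : ℝ :=
  ckanorm k α (fun x => (u x).1) + ckanorm k α (fun x => (u x).2)

/-- The Fourier transform `f̂(ξ) = ∫ f(x) e^{-2πi x·ξ} dx`. -/
def ft (f : Plane → ℝ) (ξ : Plane) : ℂ :=
  ∫ x : Plane, Complex.exp (((-2) * π * dot x ξ : ℝ) * Complex.I) * (f x : ℂ)

/-- The Sobolev weight `(1+|ξ|²)^s |f̂(ξ)|²`. -/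
def sobWeight (s : ℝ) (f : Plane → ℝ) (ξ : Plane) : ℝ :=
  (1 + en ξ ^ 2) ^ s * ‖ft f ξ‖ ^ 2

/-- Membership in the Sobolev space `H^s(ℝ²)`. -/
def MemSob (s : ℝ) (f : Plane → ℝ) : Prop := Integrable (sobWeight s f)

/-- The `H^s(ℝ²)` norm. -/
def sobNorm (s : ℝ) (f : Plane → ℝ) : ℝ := (∫ ξ : Plane, sobWeight s f ξ) ^ ((1:ℝ)/2)

/-- The truncated Biot–Savart integral. -/
def bsTrunc (θ : Plane → ℝ) (ε : ℝ) (x : Plane) : Plane :=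
  (Real.Gamma (3/2) / π ^ ((3:ℝ)/2)) •
    ∫ y in {y : Plane | ε < en (x - y)}, (θ y / en (x - y) ^ 3) • perp (x - y)

/-- `u` is the principal value Biot–Savart velocity `v[θ]` of `θ`. -/
def IsBSVelocity (θ : Plane → ℝ) (u : Plane → Plane) : Prop :=
  ∀ x : Plane, Filter.Tendsto (fun ε => bsTrunc θ ε x) (𝓝[>] (0:ℝ)) (𝓝 (u x))

/-- `(θ, u)` solves the SQG equation on the time interval `[0,T]`:
`u` is the Biot–Savart velocity of `θ` and `∂ₜθ + u·∇θ = 0`. -/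
def SolvesSQGOn (T : ℝ) (θ : ℝ → Plane → ℝ) (u : ℝ → Plane → Plane) : Prop :=
  (∀ t ∈ Set.Icc (0:ℝ) T, IsBSVelocity (θ t) (u t)) ∧
  (∀ t ∈ Set.Icc (0:ℝ) T, ∀ x : Plane,
    derivWithin (fun s => θ s x) (Set.Icc 0 T) t + dot (u t x) (grad (θ t) x) = 0)

/-- Smoothness on `ℝ² × [0,T]`. -/
def SmoothOn2 (T : ℝ) (θ : ℝ → Plane → ℝ) : Prop :=
  ContDiffOn ℝ (⊤ : ℕ∞) (fun p : Plane × ℝ => θ p.2 p.1)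
    ((Set.univ : Set Plane) ×ˢ Set.Icc (0:ℝ) T)

/-- A classical solution of SQG on `[0,T]`: continuous and differentiable on
`ℝ² × [0,T]`, in `L^∞([0,T];H^{1+α})` for some `α > 0`, solving SQG pointwise. -/
def IsClassicalSolution (T : ℝ) (θ : ℝ → Plane → ℝ) (u : ℝ → Plane → Plane) : Prop :=
  ContinuousOn (fun p : Plane × ℝ => θ p.2 p.1)
      ((Set.univ : Set Plane) ×ˢ Set.Icc (0:ℝ) T) ∧
  (∀ (x : Plane), ∀ t ∈ Set.Icc (0:ℝ) T,
    DifferentiableWithinAt ℝ (fun p : Plane × ℝ => θ p.2 p.1)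
      ((Set.univ : Set Plane) ×ˢ Set.Icc (0:ℝ) T) (x, t)) ∧
  (∃ α > (0:ℝ), ∃ M : ℝ, ∀ t ∈ Set.Icc (0:ℝ) T,
    MemSob (1 + α) (θ t) ∧ sobNorm (1 + α) (θ t) ≤ M) ∧
  SolvesSQGOn T θ u

/-- Zero mean over every circle centered at the origin. -/
def ZeroCircleMeans {E : Type*} [NormedAddCommGroup E] [NormedSpace ℝ E]
    (f : Plane → E) : Prop :=
  ∀ r > (0:ℝ), (∫ α in (0:ℝ)..(2 * π), f (r * Real.cos α, r * Real.sin α)) = 0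

/-- The oscillatory background profile `ω̄`. -/
def omegaBar (s K lam N : ℝ) (g : Plane → ℝ) (x : Plane) : ℝ :=
  K⁻¹ * lam ^ (1 - s) * N ^ (-s) * g (lam • x) *
    Real.sin (lam * N * x.1) * Real.sin (lam * N * x.2)

/-- The pseudovelocity `v̄[ω̄]`. -/
def vBar (s K lam N : ℝ) (g : Plane → ℝ) (x : Plane) : Plane :=
  (g (lam • x) / (Real.sqrt 2 * K * lam ^ (s - 1) * N ^ s)) •
    ((-(Real.sin (lam * N * x.1) * Real.cos (lam * N * x.2)),
      Real.cos (lam * N * x.1) * Real.sin (lam * N * x.2)) : Plane)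

end SQG

namespace SQG

lemma en_pos {x : Plane} (hx : x ≠ 0) : 0 < en x := by
  have h : x.1 ≠ 0 ∨ x.2 ≠ 0 := by
    by_contra h; push_neg at h; exact hx (Prod.ext h.1 h.2)
  unfold en
  rcases h with h | h
  · exact Real.sqrt_pos.mpr (by positivity)
  · exact Real.sqrt_pos.mpr (by positivity)

lemma en_rot (φ : ℝ) (x : Plane) : en (rot φ x) = en x := by
  unfold en rot
  congr 1
  have := Real.sin_sq_add_cos_sq φ
  dsimp only
  nlinarith [this]

lemma dot_rot (φ : ℝ) (x y : Plane) : dot (rot φ x) (rot φ y) = dot x y := by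
  unfold dot rot
  dsimp only
  linear_combination (x.1 * y.1 + x.2 * y.2) * (Real.sin_sq_add_cos_sq φ)

lemma rot_rot (a b : ℝ) (x : Plane) : rot a (rot b x) = rot (a + b) x := by
  unfold rot
  dsimp only
  rw [Real.cos_add, Real.sin_add]
  exact Prod.ext (by ring) (by ring)

lemma rot_zero (x : Plane) : rot 0 x = x := by
  simp [rot]

lemma rot_periodic (x : Plane) : Function.Periodic (fun β => rot β x) (2 * π) := by
  intro β
  simp [rot, Real.cos_add_two_pi, Real.sin_add_two_pi]

def rotMEquiv (φ : ℝ) : Plane ≃ᵐ Plane :=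
  (Complex.measurableEquivRealProd.symm.trans
    ((rotation (Circle.exp φ)).toHomeomorph.toMeasurableEquiv)).trans
    Complex.measurableEquivRealProd

lemma rotMEquiv_apply (φ : ℝ) (x : Plane) : rotMEquiv φ x = rot φ x := by
  show Complex.measurableEquivRealProd
      (rotation (Circle.exp φ) (Complex.measurableEquivRealProd.symm x)) = rot φ x
  rw [Complex.measurableEquivRealProd_apply, Complex.measurableEquivRealProd_symm_apply,
    rotation_apply, Circle.coe_exp, Complex.exp_mul_I]
  simp only [rot, Complex.add_re, Complex.add_im, Complex.mul_re, Complex.mul_im,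
    Complex.cos_ofReal_re, Complex.cos_ofReal_im, Complex.sin_ofReal_re, Complex.sin_ofReal_im,
    Complex.I_re, Complex.I_im, Complex.ofReal_re, Complex.ofReal_im]
  exact Prod.ext (by ring) (by ring)

lemma rotMEquiv_coe (φ : ℝ) : ⇑(rotMEquiv φ) = rot φ := funext (rotMEquiv_apply φ)

lemma rot_measurePreserving (φ : ℝ) :
    MeasurePreserving (rot φ) (volume : Measure Plane) volume := by
  have h : MeasurePreserving (⇑(rotMEquiv φ)) (volume : Measure Plane) volume :=
    Complex.volume_preserving_equiv_real_prod.comp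
      (((rotation (Circle.exp φ)).measurePreserving).comp
        Complex.volume_preserving_equiv_real_prod.symm)
  rwa [rotMEquiv_coe] at h

lemma rot_embedding (φ : ℝ) : MeasurableEmbedding (rot φ) := by
  have h := (rotMEquiv φ).measurableEmbedding
  rwa [rotMEquiv_coe] at h

lemma integral_rot {E : Type*} [NormedAddCommGroup E] [NormedSpace ℝ E]
    (φ : ℝ) (F : Plane → E) : ∫ x : Plane, F (rot φ x) = ∫ x : Plane, F x :=
  (rot_measurePreserving φ).integral_comp (rot_embedding φ) F


lemma rot_angle {x : Plane} (hx : x ≠ 0) :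
    ∃ θ : ℝ, ∀ φ : ℝ, rot φ x = (en x * Real.cos (φ + θ), en x * Real.sin (φ + θ)) := by
  set z : ℂ := Complex.mk x.1 x.2 with hz
  have hz0 : z ≠ 0 := by
    simp only [hz, ne_eq, Complex.ext_iff, Complex.zero_re, Complex.zero_im, not_and_or]
    by_contra h
    push_neg at h
    exact hx (Prod.ext h.1 h.2)
  have habs : en x = ‖z‖ := by
    rw [en, Complex.norm_def, Complex.normSq_apply]
    norm_num [hz, pow_two]
  have habs0 : ‖z‖ ≠ 0 := norm_ne_zero_iff.mpr hz0
  have h1 : x.1 = en x * Real.cos z.arg := by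
    rw [Complex.cos_arg hz0, habs]
    rw [show z.re = x.1 from rfl, mul_comm, div_mul_cancel₀ _ habs0]
  have h2 : x.2 = en x * Real.sin z.arg := by
    rw [Complex.sin_arg, habs]
    rw [show z.im = x.2 from rfl, mul_comm, div_mul_cancel₀ _ habs0]
  refine ⟨z.arg, fun φ => ?_⟩
  unfold rot
  rw [Real.cos_add, Real.sin_add]
  exact Prod.ext (by dsimp only; rw [h1, h2]; ring) (by dsimp only; rw [h1, h2]; ring)

lemma circle_shift (F : Plane → ℂ) {x : Plane} (hx : x ≠ 0) :
    (∫ φ in (0:ℝ)..(2 * π), F (rot φ x)) =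
    ∫ α in (0:ℝ)..(2 * π), F (en x * Real.cos α, en x * Real.sin α) := by
  obtain ⟨θ, hθ⟩ := rot_angle hx
  have hper : Function.Periodic
      (fun α => F (en x * Real.cos α, en x * Real.sin α)) (2 * π) := by
    intro α
    simp [Real.cos_add_two_pi, Real.sin_add_two_pi]
  calc (∫ φ in (0:ℝ)..(2 * π), F (rot φ x))
      = ∫ φ in (0:ℝ)..(2 * π),
          (fun α => F (en x * Real.cos α, en x * Real.sin α)) (φ + θ) := by
        simp only [hθ]
    _ = ∫ α in (0 + θ:ℝ)..(2 * π + θ),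
          F (en x * Real.cos α, en x * Real.sin α) :=
        intervalIntegral.integral_comp_add_right
          (fun α => F (en x * Real.cos α, en x * Real.sin α)) θ
    _ = ∫ α in (0:ℝ)..(2 * π), F (en x * Real.cos α, en x * Real.sin α) := by
        have h := hper.intervalIntegral_add_eq θ 0
        rw [zero_add] at h
        rw [zero_add, add_comm (2 * π) θ, h]

lemma integral_zero_of_circle_means {F : Plane → ℂ} (hc : Continuous F) (hi : Integrable F)
    (hm : ∀ r > (0:ℝ), (∫ α in (0:ℝ)..(2 * π), F (r * Real.cos α, r * Real.sin α)) = 0) :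
    (∫ x : Plane, F x) = 0 := by
  have hrotc : Continuous fun p : ℝ × Plane => F (rot p.1 p.2) := by
    apply hc.comp
    unfold rot
    fun_prop
  have hint : Integrable (Function.uncurry fun φ (x : Plane) => F (rot φ x))
      ((volume.restrict (Set.Ioc (0:ℝ) (2 * π))).prod volume) := by
    refine (integrable_prod_iff ?_).mpr ⟨?_, ?_⟩
    · exact hrotc.aestronglyMeasurable
    · exact ae_of_all _ fun φ =>
        (rot_measurePreserving φ).integrable_comp_emb (rot_embedding φ) |>.mpr hi
    · have heq : (fun φ => ∫ x : Plane, ‖F (rot φ x)‖) = fun _ => ∫ x : Plane, ‖F x‖ := by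
        funext φ
        exact integral_rot φ (fun x => ‖F x‖)
      simp only [Function.uncurry_apply_pair]
      rw [heq]
      exact integrableOn_const measure_Ioc_lt_top.ne
  have swap := integral_integral_swap hint
  have hL : (∫ φ in Set.Ioc (0:ℝ) (2 * π), ∫ x : Plane, F (rot φ x)) =
      (2 * π) • ∫ x : Plane, F x := by
    have : (fun φ => ∫ x : Plane, F (rot φ x)) = fun _ => ∫ x : Plane, F x := by
      funext φ; exact integral_rot φ F
    rw [this, setIntegral_const, measureReal_def, Real.volume_Ioc, sub_zero,
      ENNReal.toReal_ofReal (by positivity)]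
  have hR : (∫ x : Plane, ∫ φ in Set.Ioc (0:ℝ) (2 * π), F (rot φ x)) = 0 := by
    have h0 : ∀ x : Plane, x ≠ 0 → (∫ φ in Set.Ioc (0:ℝ) (2 * π), F (rot φ x)) = 0 := by
      intro x hx
      rw [← intervalIntegral.integral_of_le (by positivity), circle_shift F hx]
      exact hm (en x) (en_pos hx)
    have hsing : (volume : Measure Plane) {(0 : Plane)} = 0 := by
      rw [show ({(0 : Plane)} : Set Plane) = ({0} : Set ℝ) ×ˢ ({0} : Set ℝ) from
        (Set.singleton_prod_singleton).symm]
      rw [MeasureTheory.Measure.volume_eq_prod, Measure.prod_prod, Real.volume_singleton, mul_zero]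
    have hne : ∀ᵐ x : Plane ∂volume, x ≠ 0 := by
      rw [ae_iff]
      convert hsing using 2
      ext x
      simp
    refine integral_eq_zero_of_ae ?_
    filter_upwards [hne] with x hx
    exact h0 x hx
  rw [hL, hR] at swap
  rcases smul_eq_zero.mp swap with h | h
  · exact absurd h (by positivity)
  · exact h

lemma continuous_ker : Continuous fun p : Plane × Plane =>
    Complex.exp (((-2) * π * dot p.1 p.2 : ℝ) * Complex.I) := by
  unfold dot
  fun_prop

lemma Gcont (ρ : ℝ) : Continuous fun x : Plane => ∫ β in Set.Ioc (0:ℝ) (2 * π),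
    Complex.exp (((-2) * π * dot x (ρ * Real.cos β, ρ * Real.sin β) : ℝ) * Complex.I) := by
  refine continuous_of_dominated (bound := fun _ => (1:ℝ))
    (fun x => ?_) (fun x => ae_of_all _ fun β => ?_)
    (integrableOn_const measure_Ioc_lt_top.ne)
    (ae_of_all _ fun β => ?_)
  · exact Continuous.aestronglyMeasurable (by unfold dot; fun_prop)
  · exact le_of_eq (Complex.norm_exp_ofReal_mul_I _)
  · unfold dot; fun_prop

set_option maxHeartbeats 1000000 in
/-- **The Fourier transform preserves zero circular means**: if a Schwartz function `f`
has zero mean over every circle centered at the origin, then `∫ f̂ χ = 0` for every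
radial Schwartz function `χ`, and `f̂` has zero mean over every circle centered at `0`. -/
theorem fourier_zero_circle_means (f : SchwartzMap Plane ℝ)
    (hf : ZeroCircleMeans (⇑f)) :
    (∀ χ : SchwartzMap Plane ℝ, (∀ x y : Plane, en x = en y → χ x = χ y) →
      (∫ ξ : Plane, ft (⇑f) ξ * (χ ξ : ℂ)) = 0) ∧
    (∀ ρ : ℝ, 0 < ρ →
      (∫ β in (0:ℝ)..(2 * π), ft (⇑f) (ρ * Real.cos β, ρ * Real.sin β)) = 0) := by
  have hf' : ∀ r > (0:ℝ), (∫ α in (0:ℝ)..(2 * π), f (r * Real.cos α, r * Real.sin α)) = 0 := hf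
  have hfi : Integrable (fun x : Plane => (f x : ℂ)) volume := (f.integrable).ofReal
  constructor
  · -- Part 1
    intro χ hχ
    set H : Plane → ℂ := fun x => ∫ ξ : Plane,
        Complex.exp (((-2) * π * dot x ξ : ℝ) * Complex.I) * (χ ξ : ℂ) with hH
    have hHcont : Continuous H := by
      rw [hH]
      refine continuous_of_dominated (bound := fun ξ => ‖χ ξ‖)
        (fun x => ?_) (fun x => ae_of_all _ fun ξ => ?_) (χ.integrable.norm)
        (ae_of_all _ fun ξ => ?_)
      · exact ((continuous_ker.comp (Continuous.prodMk_right x)).mul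
          (Complex.continuous_ofReal.comp χ.continuous)).aestronglyMeasurable
      · rw [norm_mul, Complex.norm_exp_ofReal_mul_I, one_mul, Complex.norm_real]
      · exact (continuous_ker.comp (continuous_id.prodMk continuous_const)).mul
          continuous_const
    have hHrot : ∀ (φ : ℝ) (y : Plane), H (rot φ y) = H y := by
      intro φ y
      calc H (rot φ y)
          = ∫ ξ : Plane, Complex.exp (((-2) * π * dot (rot φ y) (rot φ ξ) : ℝ)
              * Complex.I) * (χ (rot φ ξ) : ℂ) :=
            (integral_rot φ fun ξ => Complex.exp (((-2) * π * dot (rot φ y) ξ : ℝ)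
              * Complex.I) * (χ ξ : ℂ)).symm
        _ = H y := by
            rw [hH]
            congr 1
            funext ξ
            rw [dot_rot, hχ (rot φ ξ) ξ (en_rot φ ξ)]
    have hHcirc : ∀ r α : ℝ, H (r * Real.cos α, r * Real.sin α) = H (r, 0) := by
      intro r α
      have h : ((r * Real.cos α, r * Real.sin α) : Plane) = rot α ((r, 0) : Plane) := by
        simp [rot, mul_comm]
      rw [h, hHrot]
    have hHbdd : ∀ x, ‖H x‖ ≤ ∫ ξ : Plane, ‖χ ξ‖ := by
      intro x
      rw [hH]
      refine (norm_integral_le_integral_norm _).trans (le_of_eq ?_)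
      congr 1
      funext ξ
      rw [norm_mul, Complex.norm_exp_ofReal_mul_I, one_mul, Complex.norm_real]
    have hmeas : AEStronglyMeasurable (Function.uncurry fun ξ x : Plane =>
        Complex.exp (((-2) * π * dot x ξ : ℝ) * Complex.I) * (f x : ℂ) * (χ ξ : ℂ))
        ((volume : Measure Plane).prod volume) :=
      (((continuous_ker.comp (continuous_snd.prodMk continuous_fst)).mul
        (Complex.continuous_ofReal.comp (f.continuous.comp continuous_snd))).mul
        (Complex.continuous_ofReal.comp (χ.continuous.comp continuous_fst))).aestronglyMeasurable
    have hint1 : Integrable (Function.uncurry fun ξ x : Plane =>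
        Complex.exp (((-2) * π * dot x ξ : ℝ) * Complex.I) * (f x : ℂ) * (χ ξ : ℂ))
        ((volume : Measure Plane).prod volume) := by
      refine (integrable_prod_iff hmeas).mpr ⟨ae_of_all _ fun ξ => ?_, ?_⟩
      · simp only [Function.uncurry_apply_pair]
        refine Integrable.mul_const ?_ _
        refine hfi.bdd_mul ?_ (ae_of_all _ fun x => le_of_eq (Complex.norm_exp_ofReal_mul_I _))
        exact (continuous_ker.comp
          ((continuous_id.prodMk (continuous_const : Continuous fun _ : Plane => ξ)))).aestronglyMeasurable
      · simp only [Function.uncurry_apply_pair]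
        have heq : (fun ξ : Plane => ∫ x : Plane,
            ‖Complex.exp (((-2) * π * dot x ξ : ℝ) * Complex.I) * (f x : ℂ) * (χ ξ : ℂ)‖)
            = fun ξ : Plane => (∫ x : Plane, ‖f x‖) * ‖χ ξ‖ := by
          funext ξ
          rw [← integral_mul_const]
          congr 1
          funext x
          rw [norm_mul, norm_mul, Complex.norm_exp_ofReal_mul_I, one_mul,
            Complex.norm_real, Complex.norm_real]
        rw [heq]
        exact (χ.integrable.norm).const_mul _
    have swap := integral_integral_swap hint1
    have hL1 : (∫ ξ : Plane, ft (⇑f) ξ * (χ ξ : ℂ)) = ∫ ξ : Plane, ∫ x : Plane,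
        Complex.exp (((-2) * π * dot x ξ : ℝ) * Complex.I) * (f x : ℂ) * (χ ξ : ℂ) := by
      congr 1
      funext ξ
      rw [ft, ← integral_mul_const]
    have hR1 : (∫ x : Plane, ∫ ξ : Plane,
        Complex.exp (((-2) * π * dot x ξ : ℝ) * Complex.I) * (f x : ℂ) * (χ ξ : ℂ))
        = ∫ x : Plane, (f x : ℂ) * H x := by
      congr 1
      funext x
      rw [hH, ← integral_const_mul]
      congr 1
      funext ξ
      ring
    have hcirc : ∀ r > (0:ℝ), (∫ α in (0:ℝ)..(2 * π),
        ((f (r * Real.cos α, r * Real.sin α) : ℂ) * H (r * Real.cos α, r * Real.sin α))) = 0 := by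
      intro r hr
      rw [intervalIntegral.integral_congr
        (g := fun α => ((f (r * Real.cos α, r * Real.sin α) : ℂ) * H (r, 0)))
        (fun α _ => by rw [hHcirc])]
      rw [intervalIntegral.integral_mul_const]
      have h0 : (∫ α in (0:ℝ)..(2 * π), ((f (r * Real.cos α, r * Real.sin α) : ℝ) : ℂ))
          = ((0:ℝ) : ℂ) := by
        rw [intervalIntegral.integral_ofReal, hf' r hr]
      rw [h0]
      simp
    have hFcont : Continuous fun x : Plane => (f x : ℂ) * H x :=
      (Complex.continuous_ofReal.comp f.continuous).mul hHcont
    have hFint : Integrable (fun x : Plane => (f x : ℂ) * H x) volume := by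
      have h := hfi.bdd_mul hHcont.aestronglyMeasurable (ae_of_all _ hHbdd)
      exact h.congr (ae_of_all _ fun x => mul_comm _ _)
    have hz := integral_zero_of_circle_means hFcont hFint hcirc
    rw [hL1, swap, hR1, hz]
  · -- Part 2
    intro ρ hρ
    have hcurve : Continuous fun β : ℝ => ((ρ * Real.cos β, ρ * Real.sin β) : Plane) := by
      fun_prop
    set G : Plane → ℂ := fun x => ∫ β in Set.Ioc (0:ℝ) (2 * π),
        Complex.exp (((-2) * π * dot x (ρ * Real.cos β, ρ * Real.sin β) : ℝ) * Complex.I)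
        with hG
    have hGcont : Continuous G := by
      rw [hG]
      exact Gcont ρ
    have hGrot : ∀ (φ : ℝ) (y : Plane), G (rot φ y) = G y := by
      intro φ y
      have hpt : ∀ β : ℝ, dot (rot φ y) (ρ * Real.cos β, ρ * Real.sin β)
          = dot y (ρ * Real.cos (β + -φ), ρ * Real.sin (β + -φ)) := by
        intro β
        have h1 : ((ρ * Real.cos β, ρ * Real.sin β) : Plane) = rot β ((ρ, 0) : Plane) := by
          simp [rot, mul_comm]
        have h2 : ((ρ * Real.cos (β + -φ), ρ * Real.sin (β + -φ)) : Plane)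
            = rot (β + -φ) ((ρ, 0) : Plane) := by
          simp [rot, mul_comm]
        rw [h1, h2]
        calc dot (rot φ y) (rot β ((ρ, 0) : Plane))
            = dot (rot (-φ) (rot φ y)) (rot (-φ) (rot β ((ρ, 0) : Plane))) :=
              (dot_rot (-φ) _ _).symm
          _ = dot y (rot (β + -φ) ((ρ, 0) : Plane)) := by
              rw [rot_rot, rot_rot, neg_add_cancel, rot_zero, add_comm (-φ) β]
      rw [hG]
      simp only [hpt]
      have hper : Function.Periodic (fun β : ℝ =>
          Complex.exp (((-2) * π * dot y (ρ * Real.cos β, ρ * Real.sin β) : ℝ)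
            * Complex.I)) (2 * π) := by
        intro β
        simp [Real.cos_add_two_pi, Real.sin_add_two_pi]
      rw [← intervalIntegral.integral_of_le (by positivity : (0:ℝ) ≤ 2 * π),
        ← intervalIntegral.integral_of_le (by positivity : (0:ℝ) ≤ 2 * π)]
      rw [intervalIntegral.integral_comp_add_right (fun β =>
        Complex.exp (((-2) * π * dot y (ρ * Real.cos β, ρ * Real.sin β) : ℝ) * Complex.I)) (-φ)]
      have h := hper.intervalIntegral_add_eq (-φ) 0
      rw [zero_add] at h
      rw [show (0:ℝ) + -φ = -φ by ring, show 2 * π + -φ = -φ + 2 * π by ring, h]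
    have hGcirc : ∀ r α : ℝ, G (r * Real.cos α, r * Real.sin α) = G (r, 0) := by
      intro r α
      have h : ((r * Real.cos α, r * Real.sin α) : Plane) = rot α ((r, 0) : Plane) := by
        simp [rot, mul_comm]
      rw [h, hGrot]
    have hGbdd : ∀ x, ‖G x‖ ≤ 2 * π := by
      intro x
      rw [hG]
      refine (norm_integral_le_integral_norm _).trans (le_of_eq ?_)
      have heq : (fun β => ‖Complex.exp (((-2) * π *
          dot x (ρ * Real.cos β, ρ * Real.sin β) : ℝ) * Complex.I)‖) = fun _ : ℝ => (1:ℝ) := by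
        funext β
        exact Complex.norm_exp_ofReal_mul_I _
      rw [heq, setIntegral_const, measureReal_def, Real.volume_Ioc, sub_zero,
        ENNReal.toReal_ofReal (by positivity), smul_eq_mul, mul_one]
    have hmeas2 : AEStronglyMeasurable (Function.uncurry fun (β : ℝ) (x : Plane) =>
        Complex.exp (((-2) * π * dot x (ρ * Real.cos β, ρ * Real.sin β) : ℝ) * Complex.I)
          * (f x : ℂ))
        ((volume.restrict (Set.Ioc (0:ℝ) (2 * π))).prod volume) :=
      ((continuous_ker.comp (continuous_snd.prodMk (hcurve.comp continuous_fst))).mul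
        (Complex.continuous_ofReal.comp (f.continuous.comp continuous_snd))).aestronglyMeasurable
    have hint2 : Integrable (Function.uncurry fun (β : ℝ) (x : Plane) =>
        Complex.exp (((-2) * π * dot x (ρ * Real.cos β, ρ * Real.sin β) : ℝ) * Complex.I)
          * (f x : ℂ))
        ((volume.restrict (Set.Ioc (0:ℝ) (2 * π))).prod volume) := by
      refine (integrable_prod_iff hmeas2).mpr ⟨ae_of_all _ fun β => ?_, ?_⟩
      · simp only [Function.uncurry_apply_pair]
        refine hfi.bdd_mul ?_ (ae_of_all _ fun x => le_of_eq (Complex.norm_exp_ofReal_mul_I _))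
        exact Continuous.aestronglyMeasurable (by unfold dot; fun_prop)
      · simp only [Function.uncurry_apply_pair]
        have heq : (fun β : ℝ => ∫ x : Plane,
            ‖Complex.exp (((-2) * π * dot x (ρ * Real.cos β, ρ * Real.sin β) : ℝ) * Complex.I)
              * (f x : ℂ)‖) = fun _ : ℝ => ∫ x : Plane, ‖f x‖ := by
          funext β
          congr 1
          funext x
          rw [norm_mul, Complex.norm_exp_ofReal_mul_I, one_mul, Complex.norm_real]
        rw [heq]
        exact integrableOn_const measure_Ioc_lt_top.ne
    have swap2 := integral_integral_swap hint2
    have hL2 : (∫ β in (0:ℝ)..(2 * π), ft (⇑f) (ρ * Real.cos β, ρ * Real.sin β))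
        = ∫ β in Set.Ioc (0:ℝ) (2 * π), ∫ x : Plane,
          Complex.exp (((-2) * π * dot x (ρ * Real.cos β, ρ * Real.sin β) : ℝ) * Complex.I)
            * (f x : ℂ) := by
      rw [intervalIntegral.integral_of_le (by positivity : (0:ℝ) ≤ 2 * π)]
      rfl
    have hR2 : (∫ x : Plane, ∫ β in Set.Ioc (0:ℝ) (2 * π),
        Complex.exp (((-2) * π * dot x (ρ * Real.cos β, ρ * Real.sin β) : ℝ) * Complex.I)
          * (f x : ℂ)) = ∫ x : Plane, G x * (f x : ℂ) := by
      congr 1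
      funext x
      rw [hG, ← integral_mul_const]
    have hcirc2 : ∀ r > (0:ℝ), (∫ α in (0:ℝ)..(2 * π),
        (G (r * Real.cos α, r * Real.sin α) * (f (r * Real.cos α, r * Real.sin α) : ℂ))) = 0 := by
      intro r hr
      rw [intervalIntegral.integral_congr
        (g := fun α => (G (r, 0) * (f (r * Real.cos α, r * Real.sin α) : ℂ)))
        (fun α _ => by rw [hGcirc])]
      rw [intervalIntegral.integral_const_mul]
      have h0 : (∫ α in (0:ℝ)..(2 * π), ((f (r * Real.cos α, r * Real.sin α) : ℝ) : ℂ))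
          = ((0:ℝ) : ℂ) := by
        rw [intervalIntegral.integral_ofReal, hf' r hr]
      rw [h0]
      simp
    have hFcont2 : Continuous fun x : Plane => G x * (f x : ℂ) :=
      hGcont.mul (Complex.continuous_ofReal.comp f.continuous)
    have hFint2 : Integrable (fun x : Plane => G x * (f x : ℂ)) volume :=
      hfi.bdd_mul hGcont.aestronglyMeasurable (ae_of_all _ hGbdd)
    have hz := integral_zero_of_circle_means hFcont2 hFint2 hcirc2
    rw [hL2, swap2, hR2, hz]

end SQG
end
end

section
/- Let P ∈ ℕ and let h : ℝ² → ℂ be measurable with ∫_{ℝ²} (1+|ξ|)^{P−1} |h(ξ)| dξ < ∞. Suppose h is P-fold symmetric and has zero mean over every circle centered at the origin. Then ∫_{ℝ²} ξ₁^{a} ξ₂^{b} h(ξ) dξ = 0 for all nonnegative integers a, b with a + b ≤ P−1. -/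
noncomputable section

open MeasureTheory Real Filter Topology Set

namespace SQG

private lemma aux_spec (P : ℕ) (g : ℝ → ℂ)
    (hg : Function.Periodic g (2 * π / P))
    (hg0 : (∫ β in (0:ℝ)..(2 * π), g β) = 0)
    (k : ℤ) (hk : k.natAbs < P) :
    (∫ β in (0:ℝ)..(2 * π), Complex.exp (k * β * Complex.I) * g β) = 0 := by
  have hP : (0:ℕ) < P := lt_of_le_of_lt (Nat.zero_le _) hk
  have hPR : (P:ℝ) ≠ 0 := Nat.cast_ne_zero.2 hP.ne'
  rcases eq_or_ne k 0 with rfl | hk0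
  · simpa using hg0
  set c : ℝ := 2 * π / P with hc
  set H : ℝ → ℂ := fun β => Complex.exp (k * β * Complex.I) * g β with hH
  have hg2π : Function.Periodic g (2 * π) := by
    have := hg.nat_mul P
    rwa [mul_div_cancel₀ _ hPR] at this
  have hHper : Function.Periodic H (2 * π) := by
    intro x
    simp only [hH]
    rw [hg2π x]
    congr 1
    push_cast
    rw [mul_add, add_mul, Complex.exp_add]
    rw [show ((k:ℂ) * (2*π) * Complex.I) = (k:ℤ) * (2*π*Complex.I) by push_cast; ring,
      Complex.exp_int_mul_two_pi_mul_I, mul_one]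
  have key : Complex.exp (k * c * Complex.I) * (∫ β in (0:ℝ)..(2*π), H β)
      = ∫ β in (0:ℝ)..(2*π), H β := by
    have h1 : (∫ β in (0:ℝ)..(2*π), H (β + c)) = ∫ β in (0+c)..(2*π+c), H β :=
      intervalIntegral.integral_comp_add_right H c
    have h2 : (∫ β in (0+c)..(2*π+c), H β) = ∫ β in (0:ℝ)..(2*π), H β := by
      have := hHper.intervalIntegral_add_eq c 0
      simpa [add_comm] using this
    have h3 : ∀ β : ℝ, H (β + c) = Complex.exp (k * c * Complex.I) * H β := by
      intro β
      simp only [hH]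
      rw [hg β]
      push_cast
      rw [← mul_assoc, ← Complex.exp_add]
      ring_nf
    calc Complex.exp (k * c * Complex.I) * (∫ β in (0:ℝ)..(2*π), H β)
        = ∫ β in (0:ℝ)..(2*π), Complex.exp (k * c * Complex.I) * H β := by
          rw [intervalIntegral.integral_const_mul]
      _ = ∫ β in (0:ℝ)..(2*π), H (β + c) := by
          refine intervalIntegral.integral_congr fun β _ => (h3 β).symm
      _ = ∫ β in (0:ℝ)..(2*π), H β := h1.trans h2
  have hne : Complex.exp (k * c * Complex.I) ≠ 1 := by
    intro hone
    rw [Complex.exp_eq_one_iff] at hone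
    obtain ⟨n, hn⟩ := hone
    have hIm : (k:ℝ) * c = n * (2 * π) := by
      have := congrArg Complex.im hn
      simpa [Complex.ofReal_mul, mul_comm] using this
    have h2pi : (2*π) ≠ 0 := by positivity
    have : (k:ℝ) = n * P := by
      have hmul : (k:ℝ) * (2 * π) = (n * P) * (2 * π) := by
        have := congrArg (fun x : ℝ => x * P) hIm
        simp only [hc] at this
        field_simp at this
        rw [this]; ring
      exact mul_right_cancel₀ h2pi hmul
    have hkn : k = n * P := by exact_mod_cast this
    rcases eq_or_ne n 0 with rfl | hn0
    · simp at hkn; exact hk0 hkn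
    · have : (P:ℤ) ≤ |k| := by
        rw [hkn, abs_mul]
        calc (P:ℤ) = 1 * |(P:ℤ)| := by simp
          _ ≤ |n| * |(P:ℤ)| := by
              apply mul_le_mul_of_nonneg_right _ (abs_nonneg _)
              exact Int.one_le_abs hn0
      have : (P:ℤ) ≤ k.natAbs := by rwa [Int.abs_eq_natAbs] at this
      omega
  have := sub_eq_zero.2 key
  rw [← sub_one_mul] at this
  rcases mul_eq_zero.1 this with h | h
  · exact absurd (sub_eq_zero.1 h) hne
  · exact h

private lemma aux_cos_sin_expand (a b : ℕ) (β : ℝ) :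
    ((Real.cos β : ℂ))^a * ((Real.sin β : ℂ))^b =
    ∑ j ∈ Finset.range (a+1), ∑ l ∈ Finset.range (b+1),
      ((a.choose j : ℂ) * (b.choose l) * (-1)^(b-l) * (2:ℂ)⁻¹^a * (Complex.I/2)^b) *
        Complex.exp (((2*(j:ℤ) - 2*l + b - a : ℤ)) * (β * Complex.I)) := by
  rw [Complex.ofReal_cos, Complex.ofReal_sin]
  set u : ℂ := Complex.exp (β * Complex.I) with hu
  have hu0 : u ≠ 0 := Complex.exp_ne_zero _
  have hvu : Complex.exp (-β * Complex.I) = u⁻¹ := by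
    rw [hu, ← Complex.exp_neg]; ring_nf
  have hcos : Complex.cos β = (u + u⁻¹) / 2 := by
    rw [Complex.cos, hvu]
  have hsin : Complex.sin β = (u⁻¹ - u) * Complex.I / 2 := by
    rw [Complex.sin, hvu]
  rw [hcos, hsin]
  have e1 : ((u + u⁻¹)/2)^a = ∑ j ∈ Finset.range (a+1),
      u^j * u⁻¹^(a-j) * (a.choose j) * (2:ℂ)⁻¹^a := by
    rw [div_pow, add_pow]
    rw [Finset.sum_div]
    refine Finset.sum_congr rfl fun j hj => by field_simp; rw [mul_assoc, ← mul_pow]; norm_num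
  have e2 : ((u⁻¹ - u) * Complex.I / 2)^b = ∑ l ∈ Finset.range (b+1),
      u⁻¹^l * u^(b-l) * ((-1:ℂ))^(b-l) * (b.choose l) * (Complex.I/2)^b := by
    rw [div_pow, mul_pow, sub_eq_add_neg, add_pow, Finset.sum_mul, Finset.sum_div]
    refine Finset.sum_congr rfl fun l hl => by
      rw [neg_pow u]
      simp only [div_pow, one_div, inv_pow]
      ring
  rw [e1, e2, Finset.sum_mul_sum]
  refine Finset.sum_congr rfl fun j hj => Finset.sum_congr rfl fun l hl => ?_
  have hja : j ≤ a := Nat.lt_succ_iff.1 (Finset.mem_range.1 hj)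
  have hlb : l ≤ b := Nat.lt_succ_iff.1 (Finset.mem_range.1 hl)
  have hexp : Complex.exp (((2*(j:ℤ) - 2*l + b - a : ℤ)) * (β * Complex.I))
      = u ^ (2*(j:ℤ) - 2*l + b - a) := Complex.exp_int_mul _ _
  rw [hexp]
  have : u ^ (2*(j:ℤ) - 2*l + b - a) = u^(j + (b-l)) * (u^((a-j) + l))⁻¹ := by
    rw [← zpow_natCast u (j + (b-l)), ← zpow_natCast u ((a-j) + l), ← zpow_neg, ← zpow_add₀ hu0]
    congr 1
    push_cast [hja, hlb]
    ring
  rw [this, pow_add, pow_add, inv_pow, inv_pow, mul_inv]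
  field_simp
  rw [one_div_pow, mul_right_comm _ _ (u ^ l), mul_assoc _ (1 / u ^ l), one_div_mul_cancel (pow_ne_zero _ hu0), mul_one]

private lemma aux_circle_moment (P a b : ℕ) (hab : a + b + 1 ≤ P) (g : ℝ → ℂ)
    (hg : Function.Periodic g (2 * π / P))
    (hgint : IntervalIntegrable g volume 0 (2 * π))
    (hg0 : (∫ β in (0:ℝ)..(2*π), g β) = 0) :
    (∫ β in (0:ℝ)..(2*π), ((Real.cos β:ℂ))^a * ((Real.sin β:ℂ))^b * g β) = 0 := by
  set c : ℕ × ℕ → ℂ := fun p =>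
    (a.choose p.1 : ℂ) * (b.choose p.2) * (-1)^(b-p.2) * (2:ℂ)⁻¹^a * (Complex.I/2)^b with hc
  set m : ℕ × ℕ → ℤ := fun p => 2*(p.1:ℤ) - 2*p.2 + b - a with hm
  set f : ℕ × ℕ → ℝ → ℂ := fun p β =>
    c p * (Complex.exp ((m p : ℂ) * (β * Complex.I)) * g β) with hf
  have hterm : ∀ p : ℕ × ℕ, IntervalIntegrable (f p) volume 0 (2*π) := by
    intro p
    apply IntervalIntegrable.const_mul
    apply hgint.continuousOn_mul
    exact (Complex.continuous_exp.comp ((continuous_const.mul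
      (Complex.continuous_ofReal.mul continuous_const)))).continuousOn
  have step1 : (∫ β in (0:ℝ)..(2*π), ((Real.cos β:ℂ))^a * ((Real.sin β:ℂ))^b * g β)
      = ∫ β in (0:ℝ)..(2*π),
          ∑ p ∈ Finset.range (a+1) ×ˢ Finset.range (b+1), f p β := by
    refine intervalIntegral.integral_congr fun β _ => ?_
    rw [Finset.sum_product, aux_cos_sin_expand a b β, Finset.sum_mul]
    refine Finset.sum_congr rfl fun j _ => ?_
    rw [Finset.sum_mul]
    exact Finset.sum_congr rfl fun l _ => mul_assoc _ _ _
  rw [step1, intervalIntegral.integral_finset_sum (fun p _ => hterm p)]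
  refine Finset.sum_eq_zero fun p hp => ?_
  obtain ⟨hj, hl⟩ := Finset.mem_product.1 hp
  have hja : p.1 ≤ a := Nat.lt_succ_iff.1 (Finset.mem_range.1 hj)
  have hlb : p.2 ≤ b := Nat.lt_succ_iff.1 (Finset.mem_range.1 hl)
  have hmlt : (m p).natAbs < P := by simp only [hm]; omega
  have hzero := aux_spec P g hg hg0 (m p) hmlt
  have heq : (∫ β in (0:ℝ)..(2*π), Complex.exp ((m p : ℂ) * (β * Complex.I)) * g β) = 0 := by
    rw [← hzero]
    exact intervalIntegral.integral_congr fun β _ => by rw [mul_assoc]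
  simp only [hf]
  rw [intervalIntegral.integral_const_mul, heq, mul_zero]

private lemma aux_integrableOn_polar {E : Type*} [NormedAddCommGroup E] [NormedSpace ℝ E]
    (f : ℝ × ℝ → E) (hf : Integrable f) :
    IntegrableOn (fun p : ℝ × ℝ => p.1 • f (polarCoord.symm p)) polarCoord.target := by
  set B : ℝ × ℝ → ℝ × ℝ →L[ℝ] ℝ × ℝ := fun p =>
    LinearMap.toContinuousLinearMap (Matrix.toLin (Module.Basis.finTwoProd ℝ) (Module.Basis.finTwoProd ℝ)
      !![Real.cos p.2, -p.1 * Real.sin p.2; Real.sin p.2, p.1 * Real.cos p.2]) with hB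
  have A : ∀ p ∈ polarCoord.target, HasFDerivWithinAt polarCoord.symm (B p) polarCoord.target p :=
    fun p _ => (hasFDerivAt_polarCoord_symm p).hasFDerivWithinAt
  have B_det : ∀ p, (B p).det = p.1 := by
    intro p
    conv_rhs => rw [← one_mul p.1, ← cos_sq_add_sin_sq p.2]
    simp only [hB, neg_mul, LinearMap.det_toContinuousLinearMap, LinearMap.det_toLin,
      Matrix.det_fin_two_of, sub_neg_eq_add]
    ring
  have hinj : InjOn polarCoord.symm polarCoord.target := polarCoord.symm.injOn
  have himg : polarCoord.symm '' polarCoord.target = polarCoord.source :=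
    polarCoord.symm_image_target_eq_source
  have h1 : IntegrableOn f (polarCoord.symm '' polarCoord.target) := by
    rw [himg]; exact hf.integrableOn
  rw [integrableOn_image_iff_integrableOn_abs_det_fderiv_smul volume
    polarCoord.open_target.measurableSet A hinj f] at h1
  refine h1.congr_fun (fun p hp => ?_) polarCoord.open_target.measurableSet
  beta_reduce
  rw [B_det, abs_of_pos hp.1]


set_option maxHeartbeats 1000000 in
/-- **Vanishing of low order moments of a `P`-fold symmetric function with zero
circular means**: `∫ ξ₁^a ξ₂^b h(ξ) dξ = 0` whenever `a + b ≤ P − 1`. -/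
theorem moments_vanish (P : ℕ) (h : Plane → ℂ) (hmeas : Measurable h)
    (hint : Integrable (fun ξ : Plane => (1 + en ξ) ^ (P - 1) * ‖h ξ‖))
    (hsym : PFoldSymmetric P h) (hzm : ZeroCircleMeans h) :
    ∀ a b : ℕ, a + b + 1 ≤ P →
      (∫ ξ : Plane, ((ξ.1 ^ a * ξ.2 ^ b : ℝ) : ℂ) * h ξ) = 0 := by
  intro a b hab
  have hP : 0 < P := by omega
  have hPR : (P:ℝ) ≠ 0 := Nat.cast_ne_zero.2 hP.ne'
  set F : Plane → ℂ := fun ξ => ((ξ.1 ^ a * ξ.2 ^ b : ℝ) : ℂ) * h ξ with hF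
  set W : Plane → ℝ := fun ξ => (1 + en ξ) ^ (P - 1) * ‖h ξ‖ with hW
  -- integrability of F
  have hFmeas : AEStronglyMeasurable F volume :=
    ((Complex.measurable_ofReal.comp
      ((measurable_fst.pow_const a).mul (measurable_snd.pow_const b))).mul
      hmeas).aestronglyMeasurable
  have hbound : ∀ ξ : Plane, ‖F ξ‖ ≤ W ξ := by
    intro ξ
    have hen0 : 0 ≤ en ξ := Real.sqrt_nonneg _
    have h1 : |ξ.1| ≤ 1 + en ξ := by
      have : |ξ.1| ≤ en ξ := by
        rw [← Real.sqrt_sq_eq_abs]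
        exact Real.sqrt_le_sqrt (by nlinarith [sq_nonneg ξ.2])
      linarith
    have h2 : |ξ.2| ≤ 1 + en ξ := by
      have : |ξ.2| ≤ en ξ := by
        rw [← Real.sqrt_sq_eq_abs]
        exact Real.sqrt_le_sqrt (by nlinarith [sq_nonneg ξ.1])
      linarith
    have h3 : |ξ.1 ^ a * ξ.2 ^ b| ≤ (1 + en ξ) ^ (P - 1) := by
      rw [abs_mul, abs_pow, abs_pow]
      calc |ξ.1| ^ a * |ξ.2| ^ b ≤ (1 + en ξ) ^ a * (1 + en ξ) ^ b := by
            apply mul_le_mul (pow_le_pow_left₀ (abs_nonneg _) h1 a)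
              (pow_le_pow_left₀ (abs_nonneg _) h2 b) (by positivity) (by positivity)
        _ = (1 + en ξ) ^ (a + b) := (pow_add _ _ _).symm
        _ ≤ (1 + en ξ) ^ (P - 1) := by
            apply pow_le_pow_right₀ (by linarith) (by omega)
    calc ‖F ξ‖ = |ξ.1 ^ a * ξ.2 ^ b| * ‖h ξ‖ := by
          simp only [hF]
          rw [norm_mul, Complex.norm_real, Real.norm_eq_abs]
      _ ≤ (1 + en ξ) ^ (P - 1) * ‖h ξ‖ :=
          mul_le_mul_of_nonneg_right h3 (norm_nonneg _)
  have hFint : Integrable F := hint.mono' hFmeas (Filter.Eventually.of_forall hbound)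
  -- polar coordinates
  rw [show (∫ ξ : Plane, ((ξ.1 ^ a * ξ.2 ^ b : ℝ) : ℂ) * h ξ) = ∫ ξ : Plane, F ξ from rfl,
    ← integral_comp_polarCoord_symm F]
  have hFpolar : IntegrableOn (fun p : ℝ × ℝ => p.1 • F (polarCoord.symm p))
      polarCoord.target := aux_integrableOn_polar F hFint
  have hWpolar : IntegrableOn (fun p : ℝ × ℝ => p.1 • W (polarCoord.symm p))
      polarCoord.target := aux_integrableOn_polar W hint
  rw [polarCoord_target] at hFpolar ⊢
  rw [Measure.volume_eq_prod] at hFpolar ⊢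
  rw [setIntegral_prod _ hFpolar]
  -- reduce to a.e. vanishing of the inner integral
  have haeW : ∀ᵐ ρ ∂(volume.restrict (Ioi (0:ℝ))),
      Integrable (fun β => ρ • W (polarCoord.symm (ρ, β)))
        (volume.restrict (Ioo (-π) π)) := by
    have h' := hWpolar
    rw [polarCoord_target, Measure.volume_eq_prod] at h'
    rw [IntegrableOn, ← Measure.prod_restrict] at h'
    exact h'.prod_right_ae
  refine integral_eq_zero_of_ae ?_
  filter_upwards [haeW, ae_restrict_mem measurableSet_Ioi] with ρ hWρ hρ
  simp only [Pi.zero_apply]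
  set g : ℝ → ℂ := fun β => h (ρ * Real.cos β, ρ * Real.sin β) with hg
  have hen : ∀ β : ℝ, en (ρ * Real.cos β, ρ * Real.sin β) = ρ := by
    intro β
    have : (ρ * Real.cos β) ^ 2 + (ρ * Real.sin β) ^ 2 = ρ ^ 2 := by
      have := Real.cos_sq_add_sin_sq β; nlinarith
    rw [en]; simp only [this]
    exact Real.sqrt_sq (le_of_lt hρ)
  -- integrability of g on Ioo (-π) π
  have hc0 : ρ * (1 + ρ) ^ (P - 1) ≠ 0 := by
    have h0 : (0:ℝ) < ρ := hρ
    positivity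
  have hWρ' : Integrable (fun β => (ρ * (1 + ρ) ^ (P - 1)) * ‖g β‖)
      (volume.restrict (Ioo (-π) π)) := by
    refine hWρ.congr (Filter.Eventually.of_forall fun β => ?_)
    simp only [hW, polarCoord_symm_apply, hen β, smul_eq_mul, hg]
    ring
  have habs : Integrable (fun β => ‖g β‖) (volume.restrict (Ioo (-π) π)) :=
    (integrable_const_mul_iff (isUnit_iff_ne_zero.2 hc0) _).1 hWρ'
  have hgmeas : AEStronglyMeasurable g (volume.restrict (Ioo (-π) π)) :=
    (hmeas.comp ((measurable_const.mul Real.measurable_cos).prodMk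
      (measurable_const.mul Real.measurable_sin))).aestronglyMeasurable
  have hgIoo : IntegrableOn g (Ioo (-π) π) := by
    rw [IntegrableOn, ← integrable_norm_iff hgmeas]
    exact habs.congr (Filter.Eventually.of_forall fun β => by
      simp)
  -- periodicity of g
  have hgper : Function.Periodic g (2 * π / P) := by
    intro β
    have hx : ((ρ * Real.cos (β + 2 * π / P), ρ * Real.sin (β + 2 * π / P)) : Plane)
        = rot (2 * π / P) (ρ * Real.cos β, ρ * Real.sin β) := by
      simp only [rot, Real.cos_add, Real.sin_add, Prod.mk.injEq]
      constructor <;> ring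
    simp only [hg]
    rw [hx, hsym]
  have hg2π : Function.Periodic g (2 * π) := by
    have := hgper.nat_mul P
    rwa [mul_div_cancel₀ _ hPR] at this
  -- interval integrability on [0, 2π]
  have hgm : IntervalIntegrable g volume (-π) π := by
    rw [intervalIntegrable_iff_integrableOn_Ioo_of_le (by linarith [pi_pos])]
    exact hgIoo
  have hgint2 : IntervalIntegrable g volume 0 (2 * π) := by
    have hsub1 : uIcc (0:ℝ) π ⊆ uIcc (-π) π := by
      rw [uIcc_of_le (by positivity), uIcc_of_le (by linarith [pi_pos])]
      exact Icc_subset_Icc (by linarith [pi_pos]) le_rfl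
    have hsub2 : uIcc (-π) (0:ℝ) ⊆ uIcc (-π) π := by
      rw [uIcc_of_le (by linarith [pi_pos]), uIcc_of_le (by linarith [pi_pos])]
      exact Icc_subset_Icc le_rfl (by linarith [pi_pos])
    have h1 : IntervalIntegrable g volume 0 π := hgm.mono_set hsub1
    have h2' : IntervalIntegrable g volume (-π) 0 := hgm.mono_set hsub2
    have h2 : IntervalIntegrable g volume π (2 * π) := by
      have h3 := h2'.comp_sub_right (2 * π)
      have heq : (fun x => g (x - 2 * π)) = g := funext fun x => hg2π.sub_eq x
      rw [heq] at h3
      have : -π + 2 * π = π := by ring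
      rwa [this, zero_add] at h3
    exact h1.trans h2
  have hg0 : (∫ β in (0:ℝ)..(2 * π), g β) = 0 := hzm ρ hρ
  -- compute the inner integral
  have hinner : (∫ β in Ioo (-π) π, (ρ, β).1 • F (polarCoord.symm (ρ, β)))
      = (ρ:ℂ) ^ (a + b + 1) *
        ∫ β in Ioo (-π) π, ((Real.cos β:ℂ))^a * ((Real.sin β:ℂ))^b * g β := by
    rw [← integral_const_mul]
    refine integral_congr_ae (Filter.Eventually.of_forall fun β => ?_)
    simp only [hF, polarCoord_symm_apply, hg, Complex.real_smul]
    push_cast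
    ring
  rw [hinner]
  -- the circular moment vanishes
  have hK : (∫ β in Ioo (-π) π, ((Real.cos β:ℂ))^a * ((Real.sin β:ℂ))^b * g β) = 0 := by
    set K : ℝ → ℂ := fun β => ((Real.cos β:ℂ))^a * ((Real.sin β:ℂ))^b * g β with hKdef
    have hKper : Function.Periodic K (2 * π) := by
      intro x
      simp only [hKdef, Real.cos_add_two_pi, Real.sin_add_two_pi, hg2π x]
    have e1 : (∫ β in Ioo (-π) π, K β) = ∫ β in (-π)..π, K β := by
      rw [intervalIntegral.integral_of_le (by linarith [pi_pos]),
        integral_Ioc_eq_integral_Ioo]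
    have e2 : (∫ β in (-π)..π, K β) = ∫ β in (0:ℝ)..(2 * π), K β := by
      have := hKper.intervalIntegral_add_eq (-π) 0
      rw [zero_add] at this
      rw [show -π + 2 * π = π by ring] at this
      exact this
    rw [e1, e2]
    exact aux_circle_moment P a b hab g hgper hgint2 hg0
  rw [hK, mul_zero]


end SQG
end
end

section
/- Fix s ∈ (3/2,2), K ≥ 1, λ̃, Ñ > 1, g ∈ C_c^∞(ℝ²). Define the perturbation profile ω_p(x) := K^{−1} λ̃^{1−s} Ñ^{−s} g(λ̃x) sin(λ̃Ñ x₁) and its pseudovelocity v̄[ω_p](x) := K^{−1} λ̃^{1−s} Ñ^{−s} g(λ̃x) (0, cos(λ̃Ñ x₁)). Then the pointwise identity v̄[ω_p](x)·∇ω_p(x) = K^{−2} λ̃^{3−2s} Ñ^{−2s} g(λ̃x) ∂₂g(λ̃x) cos(λ̃Ñ x₁) sin(λ̃Ñ x₁) holds for all x ∈ ℝ², and for every k ∈ ℕ and α ∈ [0,1), ‖v̄[ω_p]·∇ω_p‖_{C^{k,α}} ≤ C_{k,α} ‖g‖_{C^{k+2}}² K^{−2} λ̃^{k+α+3−2s}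 Ñ^{k+α−2s} with C_{k,α} depending only on k, α. -/
noncomputable section

open MeasureTheory Real Filter Topology Set

namespace SQG

/-- The perturbation profile `ω_p(x) = K⁻¹ λ̃^{1−s} Ñ^{−s} g(λ̃x) sin(λ̃Ñx₁)`. -/
def omegaP (s K lt Nt : ℝ) (g : Plane → ℝ) (x : Plane) : ℝ :=
  K⁻¹ * lt ^ (1 - s) * Nt ^ (-s) * g (lt • x) * Real.sin (lt * Nt * x.1)

/-- The pseudovelocity of the perturbation,
`v̄[ω_p](x) = K⁻¹ λ̃^{1−s} Ñ^{−s} g(λ̃x) (0, cos(λ̃Ñx₁))`. -/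
def vBarP (s K lt Nt : ℝ) (g : Plane → ℝ) (x : Plane) : Plane :=
  (K⁻¹ * lt ^ (1 - s) * Nt ^ (-s) * g (lt • x)) • ((0, Real.cos (lt * Nt * x.1)) : Plane)


-- ===================== auxiliary machinery =====================

lemma contDiff_pd {f : Plane → ℝ} (hf : ContDiff ℝ (⊤:ℕ∞) f) (i : Fin 2) :
    ContDiff ℝ (⊤:ℕ∞) (pd i f) := by
  have h := hf.fderiv_right (m := (⊤:ℕ∞)) (by exact_mod_cast le_top)
  exact h.clm_apply contDiff_const

lemma cd_diff {f : Plane → ℝ} (hf : ContDiff ℝ (⊤:ℕ∞) f) : Differentiable ℝ f :=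
  hf.differentiable (by norm_cast)

lemma pd_mul {f g : Plane → ℝ} (hf : Differentiable ℝ f) (hg : Differentiable ℝ g) (i : Fin 2) :
    pd i (fun x => f x * g x) = fun x => pd i f x * g x + f x * pd i g x := by
  funext x
  show fderiv ℝ (fun x => f x * g x) x _ = _
  rw [fderiv_fun_mul (hf x) (hg x)]
  simp [pd]
  ring

lemma pd_lin {f g : Plane → ℝ} (hf : Differentiable ℝ f) (hg : Differentiable ℝ g)
    (r s : ℝ) (i : Fin 2) :
    pd i (fun x => r * f x + s * g x) = fun x => r * pd i f x + s * pd i g x := by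
  funext x
  show fderiv ℝ (fun x => r * f x + s * g x) x _ = _
  rw [fderiv_fun_add ((hf x).const_mul r) ((hg x).const_mul s),
    fderiv_const_mul (hf x), fderiv_const_mul (hg x)]
  simp [pd]

lemma pd_const_mul {f : Plane → ℝ} (hf : Differentiable ℝ f) (r : ℝ) (i : Fin 2) :
    pd i (fun x => r * f x) = fun x => r * pd i f x := by
  funext x
  show fderiv ℝ (fun x => r * f x) x _ = _
  rw [fderiv_const_mul (hf x)]
  simp [pd]

lemma contDiff_pdIter {f : Plane → ℝ} (hf : ContDiff ℝ (⊤:ℕ∞) f) (i : Fin 2) (n : ℕ) :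
    ContDiff ℝ (⊤:ℕ∞) ((pd i)^[n] f) := by
  induction n with
  | zero => exact hf
  | succ n ih => rw [Function.iterate_succ_apply']; exact contDiff_pd ih i

lemma contDiff_pdm {f : Plane → ℝ} (hf : ContDiff ℝ (⊤:ℕ∞) f) (a b : ℕ) :
    ContDiff ℝ (⊤:ℕ∞) (pdm a b f) := contDiff_pdIter (contDiff_pdIter hf 1 b) 0 a

lemma pdIter_lin {f g : Plane → ℝ} (i : Fin 2) (n : ℕ) (hf : ContDiff ℝ (⊤:ℕ∞) f)
    (hg : ContDiff ℝ (⊤:ℕ∞) g) (r s : ℝ) :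
    (pd i)^[n] (fun x => r * f x + s * g x)
      = fun x => r * (pd i)^[n] f x + s * (pd i)^[n] g x := by
  induction n generalizing f g with
  | zero => rfl
  | succ n ih =>
    rw [Function.iterate_succ_apply, Function.iterate_succ_apply, Function.iterate_succ_apply,
      pd_lin (cd_diff hf) (cd_diff hg)]
    exact ih (contDiff_pd hf i) (contDiff_pd hg i)

lemma pdIter_const_mul {f : Plane → ℝ} (i : Fin 2) (n : ℕ) (hf : ContDiff ℝ (⊤:ℕ∞) f) (r : ℝ) :
    (pd i)^[n] (fun x => r * f x) = fun x => r * (pd i)^[n] f x := by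
  induction n generalizing f with
  | zero => rfl
  | succ n ih =>
    rw [Function.iterate_succ_apply, Function.iterate_succ_apply,
      pd_const_mul (cd_diff hf)]
    exact ih (contDiff_pd hf i)

lemma pdIter_zero (i : Fin 2) (n : ℕ) :
    (pd i)^[n] (fun _ => (0:ℝ)) = fun _ => (0:ℝ) := by
  induction n with
  | zero => rfl
  | succ n ih =>
    rw [Function.iterate_succ_apply]
    have h0 : pd i (fun _ => (0:ℝ)) = fun _ => (0:ℝ) := by
      funext x
      show fderiv ℝ (fun _ => (0:ℝ)) x _ = _
      rw [fderiv_fun_const]; simp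
    rw [h0, ih]

lemma pd_comm {f : Plane → ℝ} (hf : ContDiff ℝ (⊤:ℕ∞) f) :
    pd 1 (pd 0 f) = pd 0 (pd 1 f) := by
  have hsym : ∀ x : Plane, IsSymmSndFDerivAt ℝ f x := fun x =>
    hf.contDiffAt.isSymmSndFDerivAt (by rw [minSmoothness_of_isRCLikeNormedField]; exact (show ((2:ℕ∞) : WithTop ℕ∞) ≤ ((⊤:ℕ∞) : WithTop ℕ∞) from WithTop.coe_le_coe.2 le_top))
  have hd : Differentiable ℝ (fderiv ℝ f) :=
    (hf.fderiv_right (m := (⊤:ℕ∞)) (by exact_mod_cast le_top)).differentiable (by norm_cast)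
  have key : ∀ (v w : Plane) (x : Plane),
      fderiv ℝ (fun y => fderiv ℝ f y v) x w = fderiv ℝ (fderiv ℝ f) x w v := by
    intro v w x
    have h0 : (fun y => fderiv ℝ f y v) = fun y => (fderiv ℝ f y) ((fun _ => v) y) := rfl
    rw [h0, fderiv_clm_apply (hd x) (differentiableAt_const v)]
    simp
  funext x
  show fderiv ℝ (fun y => fderiv ℝ f y _) x _ = fderiv ℝ (fun y => fderiv ℝ f y _) x _
  simp only [show ((1:Fin 2) = 0) = False by simp, if_false, if_pos rfl]
  rw [key, key]
  exact hsym x _ _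

-- support and sup lemmas
lemma hcs_pd {f : Plane → ℝ} (hf : HasCompactSupport f) (i : Fin 2) :
    HasCompactSupport (pd i f) := by
  refine HasCompactSupport.intro hf (fun x hx => ?_)
  have h0 : fderiv ℝ f x = 0 := by
    by_contra h
    exact hx (support_fderiv_subset ℝ (by simpa [Function.mem_support] using h))
  simp [pd, h0]

lemma hcs_pdm {f : Plane → ℝ} (hf : HasCompactSupport f) (a b : ℕ) :
    HasCompactSupport (pdm a b f) := by
  have h1 : ∀ (i : Fin 2) (n : ℕ) (g : Plane → ℝ), HasCompactSupport g →
      HasCompactSupport ((pd i)^[n] g) := by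
    intro i n
    induction n with
    | zero => exact fun g h => h
    | succ n ih =>
      intro g hg
      rw [Function.iterate_succ_apply']
      exact hcs_pd (ih g hg) i
  exact h1 0 a _ (h1 1 b f hf)

lemma abs_le_supAbs {f : Plane → ℝ} (hc : Continuous f) (hs : HasCompactSupport f) (x : Plane) :
    |f x| ≤ supAbs f := by
  have habs : HasCompactSupport (fun x => |f x|) := hs.comp_left (g := abs) abs_zero
  obtain ⟨C, hC⟩ := hc.abs.bounded_above_of_compact_support habs
  have hbdd : BddAbove (Set.range fun x : Plane => |f x|) := by
    refine ⟨C, ?_⟩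
    rintro y ⟨x, rfl⟩
    simpa using hC x
  exact le_ciSup hbdd x

lemma supAbs_nonneg (f : Plane → ℝ) : 0 ≤ supAbs f :=
  Real.iSup_nonneg (fun x => abs_nonneg _)

lemma supAbs_le {f : Plane → ℝ} {c : ℝ} (hc : 0 ≤ c) (h : ∀ x, |f x| ≤ c) : supAbs f ≤ c :=
  Real.iSup_le h hc

lemma supAbs_le_cknorm (n p q : ℕ) (h : p + q ≤ n) (f : Plane → ℝ) :
    supAbs (pdm p q f) ≤ cknorm n f := by
  have h1 : supAbs (pdm p q f) ≤ ∑ b ∈ Finset.range (n+1-p), supAbs (pdm p b f) :=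
    Finset.single_le_sum (f := fun b => supAbs (pdm p b f))
      (fun b _ => supAbs_nonneg _) (Finset.mem_range.2 (by omega))
  refine h1.trans ?_
  exact Finset.single_le_sum (f := fun a => ∑ b ∈ Finset.range (n+1-a), supAbs (pdm a b f))
    (fun a _ => Finset.sum_nonneg fun b _ => supAbs_nonneg _) (Finset.mem_range.2 (by omega))

lemma pdm_pd1 (r t : ℕ) (g : Plane → ℝ) : pdm r t (pd 1 g) = pdm r (t+1) g := by
  rw [pdm, pdm, Function.iterate_succ_apply]

lemma pd0_pdm (a b : ℕ) (f : Plane → ℝ) : pd 0 (pdm a b f) = pdm (a+1) b f := by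
  rw [pdm, pdm, Function.iterate_succ_apply']

-- product bound (Leibniz-free)
lemma prod_bd0 (a : ℕ) : ∀ (f g : Plane → ℝ), ContDiff ℝ (⊤:ℕ∞) f → ContDiff ℝ (⊤:ℕ∞) g →
    ∀ (M : ℝ),
    (∀ p r, p + r ≤ a → ∀ x, |(pd 0)^[p] f x| * |(pd 0)^[r] g x| ≤ M) →
    ∀ x, |(pd 0)^[a] (fun y => f y * g y) x| ≤ 2^a * M := by
  induction a with
  | zero =>
    intro f g hf hg M hM x
    simpa [abs_mul] using hM 0 0 le_rfl x
  | succ a ih =>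
    intro f g hf hg M hM x
    rw [Function.iterate_succ_apply, pd_mul (cd_diff hf) (cd_diff hg)]
    have hsplit : (pd 0)^[a] (fun y => pd 0 f y * g y + f y * pd 0 g y) =
        fun y => 1 * (pd 0)^[a] (fun y => pd 0 f y * g y) y
          + 1 * (pd 0)^[a] (fun y => f y * pd 0 g y) y := by
      have e := pdIter_lin 0 a ((contDiff_pd hf 0).mul hg) (hf.mul (contDiff_pd hg 0)) 1 1
      simp only [one_mul] at e ⊢
      exact e
    rw [hsplit]
    simp only [one_mul]
    have b1 : |(pd 0)^[a] (fun y => pd 0 f y * g y) x| ≤ 2^a * M := by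
      refine ih (pd 0 f) g (contDiff_pd hf 0) hg M (fun p r hpr y => ?_) x
      have e : (pd 0)^[p] (pd 0 f) = (pd 0)^[p+1] f := by rw [Function.iterate_succ_apply]
      rw [e]
      exact hM (p+1) r (by omega) y
    have b2 : |(pd 0)^[a] (fun y => f y * pd 0 g y) x| ≤ 2^a * M := by
      refine ih f (pd 0 g) hf (contDiff_pd hg 0) M (fun p r hpr y => ?_) x
      have e : (pd 0)^[r] (pd 0 g) = (pd 0)^[r+1] g := by rw [Function.iterate_succ_apply]
      rw [e]
      exact hM p (r+1) (by omega) y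
    calc |(pd 0)^[a] (fun y => pd 0 f y * g y) x + (pd 0)^[a] (fun y => f y * pd 0 g y) x|
        ≤ _ + _ := abs_add_le _ _
      _ ≤ 2^a * M + 2^a * M := add_le_add b1 b2
      _ = 2^(a+1) * M := by ring

lemma prod_bd (b : ℕ) : ∀ (a : ℕ) (f g : Plane → ℝ), ContDiff ℝ (⊤:ℕ∞) f →
    ContDiff ℝ (⊤:ℕ∞) g → ∀ (M : ℝ),
    (∀ p q r t, p + r ≤ a → q + t ≤ b → ∀ x, |pdm p q f x| * |pdm r t g x| ≤ M) →
    ∀ x, |pdm a b (fun y => f y * g y) x| ≤ 2^(a+b) * M := by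
  induction b with
  | zero =>
    intro a f g hf hg M hM x
    have e : pdm a 0 (fun y => f y * g y) = (pd 0)^[a] (fun y => f y * g y) := rfl
    rw [e]
    refine le_trans (prod_bd0 a f g hf hg M (fun p r hpr y => ?_) x) (by norm_num)
    exact hM p 0 r 0 hpr (by omega) y
  | succ b ih =>
    intro a f g hf hg M hM x
    have step : (pd 1)^[b+1] (fun y => f y * g y)
        = fun y => 1 * (pd 1)^[b] (fun y => pd 1 f y * g y) y
          + 1 * (pd 1)^[b] (fun y => f y * pd 1 g y) y := by
      rw [Function.iterate_succ_apply, pd_mul (cd_diff hf) (cd_diff hg)]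
      have e := pdIter_lin 1 b ((contDiff_pd hf 1).mul hg) (hf.mul (contDiff_pd hg 1)) 1 1
      simp only [one_mul] at e ⊢
      exact e
    have hpdm : pdm a (b+1) (fun y => f y * g y)
        = fun y => 1 * pdm a b (fun y => pd 1 f y * g y) y
          + 1 * pdm a b (fun y => f y * pd 1 g y) y := by
      rw [pdm, step]
      exact pdIter_lin 0 a (contDiff_pdIter ((contDiff_pd hf 1).mul hg) 1 b)
        (contDiff_pdIter (hf.mul (contDiff_pd hg 1)) 1 b) 1 1
    rw [hpdm]
    simp only [one_mul]
    have b1 : |pdm a b (fun y => pd 1 f y * g y) x| ≤ 2^(a+b) * M := by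
      refine ih a (pd 1 f) g (contDiff_pd hf 1) hg M (fun p q r t hpr hqt y => ?_) x
      rw [pdm_pd1]
      exact hM p (q+1) r t hpr (by omega) y
    have b2 : |pdm a b (fun y => f y * pd 1 g y) x| ≤ 2^(a+b) * M := by
      refine ih a f (pd 1 g) hf (contDiff_pd hg 1) M (fun p q r t hpr hqt y => ?_) x
      rw [pdm_pd1]
      exact hM p q r (t+1) hpr (by omega) y
    calc |pdm a b (fun y => pd 1 f y * g y) x + pdm a b (fun y => f y * pd 1 g y) x|
        ≤ _ + _ := abs_add_le _ _
      _ ≤ 2^(a+b) * M + 2^(a+b) * M := add_le_add b1 b2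
      _ = 2^(a+(b+1)) * M := by ring

-- the shape machinery
/-- the shape `P.1(lt•x) sin(μ x₁) + P.2(lt•x) cos(μ x₁)` -/
def shp (lt μ : ℝ) (P : (Plane → ℝ) × (Plane → ℝ)) : Plane → ℝ :=
  fun x => P.1 (lt • x) * Real.sin (μ * x.1) + P.2 (lt • x) * Real.cos (μ * x.1)

def dd0 (lt μ : ℝ) (P : (Plane → ℝ) × (Plane → ℝ)) : (Plane → ℝ) × (Plane → ℝ) :=
  (fun x => lt * pd 0 P.1 x + (-μ) * P.2 x, fun x => lt * pd 0 P.2 x + μ * P.1 x)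

def dd1 (lt μ : ℝ) (P : (Plane → ℝ) × (Plane → ℝ)) : (Plane → ℝ) × (Plane → ℝ) :=
  (fun x => lt * pd 1 P.1 x, fun x => lt * pd 1 P.2 x)

def Sm (P : (Plane → ℝ) × (Plane → ℝ)) : Prop :=
  ContDiff ℝ (⊤:ℕ∞) P.1 ∧ ContDiff ℝ (⊤:ℕ∞) P.2

lemma hasFDerivAt_dilate {f : Plane → ℝ} (hf : ContDiff ℝ (⊤:ℕ∞) f) (lt : ℝ) (x : Plane) :
    HasFDerivAt (fun y : Plane => f (lt • y))
      (lt • (fderiv ℝ f (lt • x))) x := by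
  have h1 : HasFDerivAt f (fderiv ℝ f (lt • x)) (lt • x) :=
    (cd_diff hf (lt • x)).hasFDerivAt
  have h2 : HasFDerivAt (fun y : Plane => lt • y)
      (lt • ContinuousLinearMap.id ℝ Plane) x :=
    (ContinuousLinearMap.id ℝ Plane).hasFDerivAt.const_smul lt
  have h3 := h1.comp x h2
  refine h3.congr_fderiv ?_
  exact ContinuousLinearMap.ext fun v => by simp

lemma hasFDerivAt_sinlin (μ : ℝ) (x : Plane) :
    HasFDerivAt (fun y : Plane => Real.sin (μ * y.1))
      ((μ * Real.cos (μ * x.1)) • (ContinuousLinearMap.fst ℝ ℝ ℝ)) x := by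
  have hl : HasFDerivAt (fun y : Plane => μ * y.1)
      (μ • (ContinuousLinearMap.fst ℝ ℝ ℝ)) x := by
    have h := (ContinuousLinearMap.fst ℝ ℝ ℝ).hasFDerivAt (x := x)
    exact h.const_smul μ
  have hs := (Real.hasDerivAt_sin (μ * x.1)).comp_hasFDerivAt x hl
  refine hs.congr_fderiv ?_
  refine ContinuousLinearMap.ext fun v => ?_
  simp [ContinuousLinearMap.comp_apply]
  ring

lemma hasFDerivAt_coslin (μ : ℝ) (x : Plane) :
    HasFDerivAt (fun y : Plane => Real.cos (μ * y.1))
      ((-(μ * Real.sin (μ * x.1))) • (ContinuousLinearMap.fst ℝ ℝ ℝ)) x := by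
  have hl : HasFDerivAt (fun y : Plane => μ * y.1)
      (μ • (ContinuousLinearMap.fst ℝ ℝ ℝ)) x := by
    have h := (ContinuousLinearMap.fst ℝ ℝ ℝ).hasFDerivAt (x := x)
    exact h.const_smul μ
  have hs := (Real.hasDerivAt_cos (μ * x.1)).comp_hasFDerivAt x hl
  refine hs.congr_fderiv ?_
  refine ContinuousLinearMap.ext fun v => ?_
  simp [ContinuousLinearMap.comp_apply]
  ring

lemma hasFDerivAt_shp {P} (hP : Sm P) (lt μ : ℝ) (x : Plane) :
    HasFDerivAt (shp lt μ P)
      ((Real.sin (μ * x.1) • (lt • (fderiv ℝ P.1 (lt • x)))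
        + (P.1 (lt • x)) • ((μ * Real.cos (μ * x.1)) • (ContinuousLinearMap.fst ℝ ℝ ℝ)))
       + (Real.cos (μ * x.1) • (lt • (fderiv ℝ P.2 (lt • x)))
        + (P.2 (lt • x)) • ((-(μ * Real.sin (μ * x.1))) • (ContinuousLinearMap.fst ℝ ℝ ℝ)))) x := by
  have t1 := (hasFDerivAt_dilate hP.1 lt x).mul (hasFDerivAt_sinlin μ x)
  have t2 := (hasFDerivAt_dilate hP.2 lt x).mul (hasFDerivAt_coslin μ x)
  have t3 := t1.add t2
  refine t3.congr_fderiv ?_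
  abel

lemma pd0_shp {P} (hP : Sm P) (lt μ : ℝ) :
    pd 0 (shp lt μ P) = shp lt μ (dd0 lt μ P) := by
  funext x
  have h := (hasFDerivAt_shp hP lt μ x).fderiv
  show fderiv ℝ (shp lt μ P) x _ = _
  rw [h]
  simp only [if_pos rfl, ContinuousLinearMap.add_apply, ContinuousLinearMap.smul_apply,
    ContinuousLinearMap.coe_fst', smul_eq_mul, ContinuousLinearMap.coe_smul',
    Pi.smul_apply]
  have e1 : (fderiv ℝ P.1 (lt • x)) ((1:ℝ), (0:ℝ)) = pd 0 P.1 (lt • x) := by simp [pd]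
  have e2 : (fderiv ℝ P.2 (lt • x)) ((1:ℝ), (0:ℝ)) = pd 0 P.2 (lt • x) := by simp [pd]
  simp only [shp, dd0]
  rw [← e1, ← e2]
  simp
  ring

lemma pd1_shp {P} (hP : Sm P) (lt μ : ℝ) :
    pd 1 (shp lt μ P) = shp lt μ (dd1 lt μ P) := by
  funext x
  have h := (hasFDerivAt_shp hP lt μ x).fderiv
  show fderiv ℝ (shp lt μ P) x _ = _
  rw [h]
  simp only [show ((1:Fin 2) = 0) = False by simp, if_false]
  have e1 : (fderiv ℝ P.1 (lt • x)) ((0:ℝ), (1:ℝ)) = pd 1 P.1 (lt • x) := by simp [pd]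
  have e2 : (fderiv ℝ P.2 (lt • x)) ((0:ℝ), (1:ℝ)) = pd 1 P.2 (lt • x) := by simp [pd]
  simp only [shp, dd1, ContinuousLinearMap.add_apply, ContinuousLinearMap.smul_apply,
    ContinuousLinearMap.coe_fst', smul_eq_mul, ContinuousLinearMap.coe_smul',
    Pi.smul_apply]
  rw [← e1, ← e2]
  simp
  ring

lemma Sm.dd0 {P} (hP : Sm P) (lt μ : ℝ) : Sm (SQG.dd0 lt μ P) :=
  ⟨(contDiff_const.mul (contDiff_pd hP.1 0)).add (contDiff_const.mul hP.2),
   (contDiff_const.mul (contDiff_pd hP.2 0)).add (contDiff_const.mul hP.1)⟩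

lemma Sm.dd1 {P} (hP : Sm P) (lt μ : ℝ) : Sm (SQG.dd1 lt μ P) :=
  ⟨contDiff_const.mul (contDiff_pd hP.1 1), contDiff_const.mul (contDiff_pd hP.2 1)⟩

lemma Sm.dd0Iter {P} (hP : Sm P) (lt μ : ℝ) (a : ℕ) : Sm ((SQG.dd0 lt μ)^[a] P) := by
  induction a with
  | zero => exact hP
  | succ a ih => rw [Function.iterate_succ_apply']; exact ih.dd0 lt μ

lemma Sm.dd1Iter {P} (hP : Sm P) (lt μ : ℝ) (b : ℕ) : Sm ((SQG.dd1 lt μ)^[b] P) := by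
  induction b with
  | zero => exact hP
  | succ b ih => rw [Function.iterate_succ_apply']; exact ih.dd1 lt μ

lemma pd0Iter_shp {P} (hP : Sm P) (lt μ : ℝ) (a : ℕ) :
    (pd 0)^[a] (shp lt μ P) = shp lt μ ((dd0 lt μ)^[a] P) := by
  induction a generalizing P with
  | zero => rfl
  | succ a ih =>
    rw [Function.iterate_succ_apply, Function.iterate_succ_apply, pd0_shp hP]
    exact ih (hP.dd0 lt μ)

lemma pdm_shp {P} (hP : Sm P) (lt μ : ℝ) (a b : ℕ) :
    pdm a b (shp lt μ P) = shp lt μ ((dd0 lt μ)^[a] ((dd1 lt μ)^[b] P)) := by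
  have h1 : (pd 1)^[b] (shp lt μ P) = shp lt μ ((dd1 lt μ)^[b] P) := by
    clear a
    induction b generalizing P with
    | zero => rfl
    | succ b ih =>
      rw [Function.iterate_succ_apply, Function.iterate_succ_apply, pd1_shp hP]
      exact ih (hP.dd1 lt μ)
  rw [pdm, h1]
  exact pd0Iter_shp (hP.dd1Iter lt μ b) lt μ a

lemma dd_comm {P} (hP : Sm P) (lt μ : ℝ) :
    dd1 lt μ (dd0 lt μ P) = dd0 lt μ (dd1 lt μ P) := by
  have d1 := cd_diff hP.1
  have d2 := cd_diff hP.2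
  have pd01 := contDiff_pd hP.1 0
  have pd02 := contDiff_pd hP.2 0
  have pd11 := contDiff_pd hP.1 1
  have pd12 := contDiff_pd hP.2 1
  unfold dd1 dd0
  refine Prod.ext ?_ ?_ <;> simp only
  · rw [pd_lin (cd_diff pd01) d2, pd_const_mul (cd_diff pd11), pd_comm hP.1]
    funext x; ring
  · rw [pd_lin (cd_diff pd02) d1, pd_const_mul (cd_diff pd12), pd_comm hP.2]
    funext x; ring

lemma dd1_dd0Iter {P} (hP : Sm P) (lt μ : ℝ) (a : ℕ) :
    dd1 lt μ ((dd0 lt μ)^[a] P) = (dd0 lt μ)^[a] (dd1 lt μ P) := by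
  induction a generalizing P with
  | zero => rfl
  | succ a ih =>
    rw [Function.iterate_succ_apply, Function.iterate_succ_apply,
      ih (hP.dd0 lt μ), dd_comm hP]

lemma dd0Iter_bound (lt μ : ℝ) (a : ℕ) :
    ∀ (P : (Plane → ℝ) × (Plane → ℝ)) (M : ℝ), Sm P →
    (∀ j, j ≤ a → ∀ x, |(pd 0)^[j] P.1 x| + |(pd 0)^[j] P.2 x| ≤ M) →
    ∀ x, |((dd0 lt μ)^[a] P).1 x| + |((dd0 lt μ)^[a] P).2 x| ≤ (|lt| + |μ|)^a * M := by
  induction a with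
  | zero =>
    intro P M hP hM x
    simpa using hM 0 le_rfl x
  | succ a ih =>
    intro P M hP hM x
    rw [Function.iterate_succ_apply]
    have key : ∀ j, j ≤ a → ∀ x,
        |(pd 0)^[j] (dd0 lt μ P).1 x| + |(pd 0)^[j] (dd0 lt μ P).2 x| ≤ (|lt| + |μ|) * M := by
      intro j hj y
      have e1 : (pd 0)^[j] (dd0 lt μ P).1 =
          fun x => lt * (pd 0)^[j] (pd 0 P.1) x + (-μ) * (pd 0)^[j] P.2 x :=
        pdIter_lin 0 j (contDiff_pd hP.1 0) hP.2 lt (-μ)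
      have e2 : (pd 0)^[j] (dd0 lt μ P).2 =
          fun x => lt * (pd 0)^[j] (pd 0 P.2) x + μ * (pd 0)^[j] P.1 x :=
        pdIter_lin 0 j (contDiff_pd hP.2 0) hP.1 lt μ
      rw [e1, e2]
      have r1 : (pd 0)^[j] (pd 0 P.1) = (pd 0)^[j+1] P.1 := by
        rw [Function.iterate_succ_apply]
      have r2 : (pd 0)^[j] (pd 0 P.2) = (pd 0)^[j+1] P.2 := by
        rw [Function.iterate_succ_apply]
      rw [r1, r2]
      have h1 := hM (j+1) (by omega) y
      have h2 := hM j (by omega) y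
      calc |lt * (pd 0)^[j+1] P.1 y + -μ * (pd 0)^[j] P.2 y|
            + |lt * (pd 0)^[j+1] P.2 y + μ * (pd 0)^[j] P.1 y|
          ≤ (|lt| * |(pd 0)^[j+1] P.1 y| + |μ| * |(pd 0)^[j] P.2 y|)
            + (|lt| * |(pd 0)^[j+1] P.2 y| + |μ| * |(pd 0)^[j] P.1 y|) := by
            refine add_le_add ?_ ?_ <;>
            · refine (abs_add_le _ _).trans ?_
              simp [abs_mul]
        _ = |lt| * (|(pd 0)^[j+1] P.1 y| + |(pd 0)^[j+1] P.2 y|)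
            + |μ| * (|(pd 0)^[j] P.1 y| + |(pd 0)^[j] P.2 y|) := by ring
        _ ≤ |lt| * M + |μ| * M := by
            have h3 := abs_nonneg lt
            have h4 := abs_nonneg μ
            nlinarith [h1, h2]
        _ = (|lt| + |μ|) * M := by ring
    have hrec := ih (dd0 lt μ P) ((|lt| + |μ|) * M) (hP.dd0 lt μ) key x
    calc _ ≤ (|lt| + |μ|)^a * ((|lt| + |μ|) * M) := hrec
      _ = (|lt| + |μ|)^(a+1) * M := by ring

lemma dd1Iter_eq {P} (hP : Sm P) (lt μ : ℝ) (b : ℕ) :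
    (dd1 lt μ)^[b] P
      = (fun x => lt^b * (pd 1)^[b] P.1 x, fun x => lt^b * (pd 1)^[b] P.2 x) := by
  induction b generalizing P with
  | zero => simp
  | succ b ih =>
    rw [Function.iterate_succ_apply, ih (hP.dd1 lt μ)]
    unfold dd1
    simp only
    have e1 : (pd 1)^[b] (fun x => lt * pd 1 P.1 x) = fun x => lt * (pd 1)^[b+1] P.1 x := by
      rw [pdIter_const_mul 1 b (contDiff_pd hP.1 1) lt, Function.iterate_succ_apply]
    have e2 : (pd 1)^[b] (fun x => lt * pd 1 P.2 x) = fun x => lt * (pd 1)^[b+1] P.2 x := by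
      rw [pdIter_const_mul 1 b (contDiff_pd hP.2 1) lt, Function.iterate_succ_apply]
    rw [e1, e2]
    refine Prod.ext ?_ ?_ <;> simp only <;> funext x <;> ring

lemma sm_shp {P} (hP : Sm P) (lt μ : ℝ) : ContDiff ℝ (⊤:ℕ∞) (shp lt μ P) := by
  have hd : ContDiff ℝ (⊤:ℕ∞) (fun x : Plane => lt • x) := contDiff_id.const_smul lt
  have hsin : ContDiff ℝ (⊤:ℕ∞) (fun x : Plane => Real.sin (μ * x.1)) :=
    Real.contDiff_sin.comp (contDiff_const.mul contDiff_fst)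
  have hcos : ContDiff ℝ (⊤:ℕ∞) (fun x : Plane => Real.cos (μ * x.1)) :=
    Real.contDiff_cos.comp (contDiff_const.mul contDiff_fst)
  exact ((hP.1.comp hd).mul hsin).add ((hP.2.comp hd).mul hcos)

lemma shp_abs_le (lt μ : ℝ) (P) (x : Plane) :
    |shp lt μ P x| ≤ |P.1 (lt • x)| + |P.2 (lt • x)| := by
  have hs : |Real.sin (μ * x.1)| ≤ 1 := abs_le.2 ⟨Real.neg_one_le_sin _, Real.sin_le_one _⟩
  have hc : |Real.cos (μ * x.1)| ≤ 1 := abs_le.2 ⟨Real.neg_one_le_cos _, Real.cos_le_one _⟩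
  calc |shp lt μ P x|
      ≤ |P.1 (lt • x) * Real.sin (μ * x.1)| + |P.2 (lt • x) * Real.cos (μ * x.1)| :=
        abs_add_le _ _
    _ = |P.1 (lt • x)| * |Real.sin (μ * x.1)| + |P.2 (lt • x)| * |Real.cos (μ * x.1)| := by
        rw [abs_mul, abs_mul]
    _ ≤ |P.1 (lt • x)| * 1 + |P.2 (lt • x)| * 1 :=
        add_le_add (mul_le_mul_of_nonneg_left hs (abs_nonneg _))
          (mul_le_mul_of_nonneg_left hc (abs_nonneg _))
    _ = _ := by ring

-- analytic lemmas
lemma interp {A B t u α : ℝ} (hA : 0 ≤ A) (hB : 0 ≤ B) (ht : 0 < t) (hα : 0 ≤ α) (hα1 : α ≤ 1)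
    (h1 : u ≤ A) (h2 : u ≤ B * t) (hu : 0 ≤ u) :
    u / t ^ α ≤ A ^ (1 - α) * B ^ α := by
  rcases eq_or_lt_of_le hB with hB0 | hB0
  · have hu0 : u = 0 := le_antisymm (by simpa [← hB0] using h2) hu
    rw [hu0, zero_div]
    positivity
  rcases eq_or_lt_of_le hA with hA0 | hA0
  · have hu0 : u = 0 := le_antisymm (by simpa [← hA0] using h1) hu
    rw [hu0, zero_div]
    positivity
  have htα : (0:ℝ) < t ^ α := Real.rpow_pos_of_pos ht α
  have hApow : A ^ (1-α) * A ^ α = A := by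
    rw [← Real.rpow_add hA0, sub_add_cancel, Real.rpow_one]
  have hBpow : B ^ (1-α) * B ^ α = B := by
    rw [← Real.rpow_add hB0, sub_add_cancel, Real.rpow_one]
  rcases le_total t (A / B) with hcase | hcase
  · have h1α : (0:ℝ) ≤ 1 - α := by linarith
    have key : u / t ^ α ≤ B * t ^ (1 - α) := by
      rw [div_le_iff₀ htα]
      calc u ≤ B * t := h2
        _ = B * (t ^ (1 - α) * t ^ α) := by
            rw [← Real.rpow_add ht, sub_add_cancel, Real.rpow_one]
        _ = B * t ^ (1-α) * t ^ α := by ring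
    refine key.trans ?_
    have mono : t ^ (1-α) ≤ (A/B) ^ (1-α) := Real.rpow_le_rpow ht.le hcase h1α
    have hBp : (0:ℝ) < B ^ (1-α) := Real.rpow_pos_of_pos hB0 _
    calc B * t ^ (1-α) ≤ B * (A/B) ^ (1-α) := mul_le_mul_of_nonneg_left mono hB
      _ = A ^ (1-α) * B ^ α := by
          have hid : A ^ (1-α) * B ^ α * B ^ (1-α) = B * A ^ (1-α) := by
            calc A^(1-α)*B^α*B^(1-α) = A^(1-α)*(B^(1-α)*B^α) := by ring
              _ = B * A^(1-α) := by rw [hBpow]; ring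
          rw [Real.div_rpow hA hB, ← mul_div_assoc, div_eq_iff hBp.ne']
          exact hid.symm
  · have hABpos : (0:ℝ) < A / B := div_pos hA0 hB0
    have key : u / t ^ α ≤ A / t ^ α := by gcongr
    refine key.trans ?_
    have mono : (A/B) ^ α ≤ t ^ α := Real.rpow_le_rpow hABpos.le hcase hα
    have hABα : (0:ℝ) < (A/B) ^ α := Real.rpow_pos_of_pos hABpos α
    have step : A / t ^ α ≤ A / (A/B) ^ α := div_le_div_of_nonneg_left hA hABα mono
    have hAp : (0:ℝ) < A ^ α := Real.rpow_pos_of_pos hA0 _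
    have eqn : A / (A/B) ^ α = A ^ (1-α) * B ^ α := by
      rw [Real.div_rpow hA hB, div_div_eq_mul_div, div_eq_iff hAp.ne']
      calc A * B^α = (A^(1-α) * A^α) * B^α := by rw [hApow]
        _ = A^(1-α)*B^α*A^α := by ring
    exact step.trans_eq eqn

lemma norm_le_en (x : Plane) : ‖x‖ ≤ en x := by
  rw [Prod.norm_def, en]
  have h1 : ‖x.1‖ ≤ Real.sqrt (x.1^2 + x.2^2) := by
    rw [Real.norm_eq_abs, ← Real.sqrt_sq_eq_abs]
    exact Real.sqrt_le_sqrt (by nlinarith [sq_nonneg x.2])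
  have h2 : ‖x.2‖ ≤ Real.sqrt (x.1^2 + x.2^2) := by
    rw [Real.norm_eq_abs, ← Real.sqrt_sq_eq_abs]
    exact Real.sqrt_le_sqrt (by nlinarith [sq_nonneg x.1])
  exact max_le h1 h2

lemma fderiv_opnorm_le {f : Plane → ℝ} (hf : Differentiable ℝ f) (x : Plane) :
    ‖fderiv ℝ f x‖ ≤ |pd 0 f x| + |pd 1 f x| := by
  refine ContinuousLinearMap.opNorm_le_bound _ (by positivity) (fun v => ?_)
  have hv : v = v.1 • ((1:ℝ), (0:ℝ)) + v.2 • ((0:ℝ), (1:ℝ)) := by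
    refine Prod.ext ?_ ?_ <;> simp
  calc ‖(fderiv ℝ f x) v‖ = ‖v.1 * (fderiv ℝ f x) (1,0) + v.2 * (fderiv ℝ f x) (0,1)‖ := by
        nth_rewrite 1 [hv]
        rw [map_add, _root_.map_smul, _root_.map_smul]
        norm_num
    _ ≤ |v.1| * |(fderiv ℝ f x) (1,0)| + |v.2| * |(fderiv ℝ f x) (0,1)| := by
        rw [Real.norm_eq_abs]
        refine (abs_add_le _ _).trans ?_
        simp [abs_mul]
    _ ≤ ‖v‖ * |(fderiv ℝ f x) (1,0)| + ‖v‖ * |(fderiv ℝ f x) (0,1)| := by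
        have h1 : |v.1| ≤ ‖v‖ := by rw [Prod.norm_def]; exact le_max_of_le_left (by simp)
        have h2 : |v.2| ≤ ‖v‖ := by rw [Prod.norm_def]; exact le_max_of_le_right (by simp)
        gcongr <;> positivity
    _ = (|pd 0 f x| + |pd 1 f x|) * ‖v‖ := by
        simp only [pd]
        norm_num
        ring

lemma lipschitz_bound {f : Plane → ℝ} (hf : Differentiable ℝ f) {L : ℝ}
    (hL : ∀ z, |pd 0 f z| + |pd 1 f z| ≤ L) (x y : Plane) :
    |f x - f y| ≤ L * en (x - y) := by
  have hL0 : 0 ≤ L := le_trans (by positivity) (hL x)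
  have key : ‖f x - f y‖ ≤ L * ‖x - y‖ := by
    refine Convex.norm_image_sub_le_of_norm_fderiv_le
      (fun z _ => hf z) (fun z _ => ?_) convex_univ trivial trivial
    exact (fderiv_opnorm_le hf z).trans (hL z)
  rw [Real.norm_eq_abs] at key
  refine key.trans ?_
  exact mul_le_mul_of_nonneg_left (norm_le_en _) hL0

lemma holderSemi_le {f : Plane → ℝ} {S L α : ℝ} (hS : 0 ≤ S) (hL : 0 ≤ L)
    (hα : 0 ≤ α) (hα1 : α ≤ 1)
    (h1 : ∀ x, |f x| ≤ S) (h2 : ∀ x y, |f x - f y| ≤ L * en (x - y)) :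
    holderSemi α f ≤ (2 * S) ^ (1 - α) * L ^ α := by
  refine Real.iSup_le (fun p => ?_) (by positivity)
  by_cases hp : p.1 = p.2
  · rw [hp]
    simp
    positivity
  · have ht : 0 < en (p.1 - p.2) := en_pos (sub_ne_zero.2 hp)
    refine interp (by positivity) hL ht hα hα1 ?_ (h2 p.1 p.2) (abs_nonneg _)
    calc |f p.1 - f p.2| ≤ |f p.1| + |f p.2| := abs_sub _ _
      _ ≤ S + S := add_le_add (h1 _) (h1 _)
      _ = 2 * S := by ring

lemma rpow_interp_eq {w z : ℝ} (hw : 0 ≤ w) (hz : 0 < z) (k : ℕ) {α : ℝ} :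
    (w * z^k)^(1-α) * (w * z^(k+1))^α = w * z^((k:ℝ)+α) := by
  rw [Real.mul_rpow hw (pow_nonneg hz.le k), Real.mul_rpow hw (pow_nonneg hz.le (k+1)),
    ← Real.rpow_natCast z k, ← Real.rpow_natCast z (k+1),
    ← Real.rpow_mul hz.le, ← Real.rpow_mul hz.le]
  have hww : w ^ (1-α) * w ^ α = w := by
    rw [← Real.rpow_add' hw (by norm_num : (1-α) + α ≠ 0)]
    norm_num
  have hzz : z ^ ((k:ℝ) * (1-α)) * z ^ (((k:ℕ)+1 : ℕ) * α : ℝ) = z ^ ((k:ℝ)+α) := by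
    rw [← Real.rpow_add hz]
    congr 1
    push_cast
    ring
  calc w ^ (1-α) * z ^ ((k:ℝ)*(1-α)) * (w ^ α * z ^ (((k:ℕ)+1 : ℕ) * α : ℝ))
      = (w ^ (1-α) * w ^ α) * (z ^ ((k:ℝ)*(1-α)) * z ^ (((k:ℕ)+1 : ℕ) * α : ℝ)) := by ring
    _ = w * z ^ ((k:ℝ)+α) := by rw [hww, hzz]

-- part 1: the pointwise identity
lemma omegaP_deriv2 {g : Plane → ℝ} (hg : ContDiff ℝ (⊤:ℕ∞) g) (s K lt Nt : ℝ) (x : Plane) :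
    fderiv ℝ (omegaP s K lt Nt g) x ((0:ℝ), (1:ℝ))
      = (K⁻¹ * lt ^ (1-s) * Nt ^ (-s)) * lt * (pd 1 g (lt • x)) * Real.sin (lt * Nt * x.1) := by
  have h2 := (hasFDerivAt_dilate hg lt x).const_mul (K⁻¹ * lt ^ (1-s) * Nt ^ (-s))
  have h3 := h2.mul (hasFDerivAt_sinlin (lt * Nt) x)
  have heq : omegaP s K lt Nt g
      = fun y => (K⁻¹ * lt ^ (1-s) * Nt ^ (-s) * g (lt • y)) * Real.sin (lt * Nt * y.1) := by
    funext y
    simp only [omegaP]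
  rw [heq, HasFDerivAt.fderiv (f := fun y => K⁻¹ * lt ^ (1-s) * Nt ^ (-s) * g (lt • y) * Real.sin (lt * Nt * y.1)) h3]
  simp [pd]
  ring

lemma part1 {g : Plane → ℝ} (hg : ContDiff ℝ (⊤:ℕ∞) g) {s K lt Nt : ℝ}
    (hK : 1 ≤ K) (hlt : 1 < lt) (hNt : 1 < Nt) (x : Plane) :
    dot (vBarP s K lt Nt g x) (grad (omegaP s K lt Nt g) x)
      = K⁻¹ ^ 2 * lt ^ (3 - 2*s) * Nt ^ (-(2*s)) *
          (g (lt • x) * pd 1 g (lt • x) * Real.cos (lt * Nt * x.1)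
            * Real.sin (lt * Nt * x.1)) := by
  have hlt0 : (0:ℝ) < lt := by linarith
  have hNt0 : (0:ℝ) < Nt := by linarith
  have e1 : lt ^ (1-s) * lt ^ (1-s) * lt = lt ^ (3 - 2*s) := by
    rw [show (3 - 2*s : ℝ) = (1-s) + ((1-s) + 1) by ring, Real.rpow_add hlt0,
      Real.rpow_add hlt0, Real.rpow_one]
    ring
  have e2 : Nt ^ (-s) * Nt ^ (-s) = Nt ^ (-(2*s)) := by
    rw [show (-(2*s) : ℝ) = (-s) + (-s) by ring, Real.rpow_add hNt0]
  rw [dot, vBarP, grad]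
  simp only [Prod.smul_fst, Prod.smul_snd, smul_eq_mul, mul_zero, zero_mul, zero_add,
    omegaP_deriv2 hg s K lt Nt x]
  calc (K⁻¹ * lt ^ (1-s) * Nt ^ (-s) * g (lt • x)) * Real.cos (lt*Nt*x.1)
        * ((K⁻¹ * lt ^ (1-s) * Nt ^ (-s)) * lt * (pd 1 g (lt • x)) * Real.sin (lt*Nt*x.1))
      = (K⁻¹ * K⁻¹) * (lt ^ (1-s) * lt ^ (1-s) * lt) * (Nt ^ (-s) * Nt ^ (-s)) *
          (g (lt • x) * pd 1 g (lt • x) * Real.cos (lt*Nt*x.1) * Real.sin (lt*Nt*x.1)) := by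
        ring
    _ = _ := by rw [e1, e2]; ring


set_option maxHeartbeats 2000000 in
/-- **Self-interaction of the perturbation pseudosolution**: the exact pointwise
identity for `v̄[ω_p]·∇ω_p` and the resulting `C^{k,α}` bounds. -/
theorem pseudo_selfinteraction_perturbation (k : ℕ) (α : ℝ) (hα : α ∈ Set.Ico (0:ℝ) 1) :
    ∃ C : ℝ, 0 < C ∧
    ∀ (s K lt Nt : ℝ), s ∈ Set.Ioo (3/2 : ℝ) 2 → 1 ≤ K → 1 < lt → 1 < Nt →
    ∀ g : Plane → ℝ, ContDiff ℝ (⊤ : ℕ∞) g → HasCompactSupport g →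
      (∀ x : Plane,
        dot (vBarP s K lt Nt g x) (grad (omegaP s K lt Nt g) x)
          = K⁻¹ ^ 2 * lt ^ (3 - 2*s) * Nt ^ (-(2*s)) *
              (g (lt • x) * pd 1 g (lt • x) *
                Real.cos (lt * Nt * x.1) * Real.sin (lt * Nt * x.1))) ∧
      ckanorm k α (fun x => dot (vBarP s K lt Nt g x) (grad (omegaP s K lt Nt g) x))
        ≤ C * cknorm (k + 2) g ^ 2 * K⁻¹ ^ 2 *
          lt ^ ((k : ℝ) + α + 3 - 2*s) * Nt ^ ((k : ℝ) + α - 2*s) := by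
  obtain ⟨hα0, hα1⟩ := hα
  refine ⟨(((k:ℝ)+1)^2 + 2*((k:ℝ)+1)) * 3^(k+1) * 2^(k+1), by positivity, ?_⟩
  intro s K lt Nt hs hK hlt hNt g hg hgsupp
  have hlt0 : (0:ℝ) < lt := by linarith
  have hNt0 : (0:ℝ) < Nt := by linarith
  have hK0 : (0:ℝ) < K := by linarith
  refine ⟨fun x => part1 hg hK hlt hNt x, ?_⟩
  set Mg := cknorm (k+2) g with hMgdef
  have hMg : 0 ≤ Mg := by
    rw [hMgdef, cknorm]
    exact Finset.sum_nonneg fun a _ => Finset.sum_nonneg fun b _ => supAbs_nonneg _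
  have hgb : ∀ p q, p + q ≤ k+2 → ∀ x, |pdm p q g x| ≤ Mg := fun p q hpq x =>
    (abs_le_supAbs ((contDiff_pdm hg p q).continuous) (hcs_pdm hgsupp p q) x).trans
      (supAbs_le_cknorm (k+2) p q hpq g)
  have hh : ContDiff ℝ (⊤:ℕ∞) (fun y => g y * pd 1 g y) := hg.mul (contDiff_pd hg 1)
  have hhb : ∀ p q, p + q ≤ k+1 → ∀ x, |pdm p q (fun y => g y * pd 1 g y) x|
      ≤ 2^(k+1) * Mg^2 := by
    intro p q hpq x
    have h1 : |pdm p q (fun y => g y * pd 1 g y) x| ≤ 2^(p+q) * Mg^2 := by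
      refine prod_bd q p g (pd 1 g) hg (contDiff_pd hg 1) (Mg^2)
        (fun p' q' r t hpr hqt y => ?_) x
      rw [pdm_pd1]
      have b1 := hgb p' q' (by omega) y
      have b2 := hgb r (t+1) (by omega) y
      calc |pdm p' q' g y| * |pdm r (t+1) g y| ≤ Mg * Mg :=
            mul_le_mul b1 b2 (abs_nonneg _) hMg
        _ = Mg^2 := (sq Mg).symm
    refine h1.trans ?_
    have h2 : (2:ℝ)^(p+q) ≤ 2^(k+1) := by
      apply pow_le_pow_right₀ (by norm_num) (by omega)
    nlinarith [sq_nonneg Mg]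
  set B := K⁻¹ ^ 2 * lt ^ (3 - 2*s) * Nt ^ (-(2*s)) with hBdef
  have hB : 0 < B := by
    rw [hBdef]
    have h1 : (0:ℝ) < K⁻¹ := inv_pos.2 hK0
    have h2 : (0:ℝ) < lt ^ (3-2*s) := Real.rpow_pos_of_pos hlt0 _
    have h3 : (0:ℝ) < Nt ^ (-(2*s)) := Real.rpow_pos_of_pos hNt0 _
    positivity
  set μ := 2 * (lt * Nt) with hμdef
  have hμ0 : 0 < μ := by rw [hμdef]; positivity
  set P₀ : (Plane → ℝ) × (Plane → ℝ) :=
    (fun y => (B/2) * (g y * pd 1 g y), fun _ => (0:ℝ)) with hP₀def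
  have hSmP₀ : Sm P₀ := ⟨contDiff_const.mul hh, contDiff_const⟩
  have hFeq : (fun x => dot (vBarP s K lt Nt g x) (grad (omegaP s K lt Nt g) x))
      = shp lt μ P₀ := by
    funext x
    rw [part1 hg hK hlt hNt x]
    show _ = (B/2) * (g (lt • x) * pd 1 g (lt • x)) * Real.sin (μ * x.1)
      + 0 * Real.cos (μ * x.1)
    rw [show μ * x.1 = 2 * (lt * Nt * x.1) by rw [hμdef]; ring, Real.sin_two_mul, ← hBdef]
    ring
  set E := (B/2) * (2^(k+1) * Mg^2) with hEdef
  have hE : 0 ≤ E := by positivity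
  set z := lt * Nt with hzdef
  have hz1 : (1:ℝ) ≤ z := by rw [hzdef]; nlinarith
  have hz0 : (0:ℝ) < z := by linarith
  have pairbd : ∀ a b, a + b ≤ k+1 → ∀ x,
      |((dd0 lt μ)^[a] ((dd1 lt μ)^[b] P₀)).1 x| + |((dd0 lt μ)^[a] ((dd1 lt μ)^[b] P₀)).2 x|
        ≤ (lt + μ)^a * (lt^b * E) := by
    intro a b hab x
    have hQ1 : ((dd1 lt μ)^[b] P₀)
        = (fun y => (lt^b * (B/2)) * pdm 0 b (fun y => g y * pd 1 g y) y,
           fun _ => (0:ℝ)) := by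
      rw [dd1Iter_eq hSmP₀ lt μ b]
      refine Prod.ext ?_ ?_ <;> simp only
      · show (fun x => lt^b * (pd 1)^[b] P₀.1 x) = _
        rw [hP₀def]
        simp only
        rw [pdIter_const_mul 1 b hh (B/2)]
        funext y
        rw [pdm]
        simp only [Function.iterate_zero_apply]
        ring
      · show (fun x => lt^b * (pd 1)^[b] P₀.2 x) = _
        rw [hP₀def]
        simp only
        rw [pdIter_zero 1 b]
        funext y
        simp
    have key : ∀ j, j ≤ a → ∀ y,
        |(pd 0)^[j] ((dd1 lt μ)^[b] P₀).1 y| + |(pd 0)^[j] ((dd1 lt μ)^[b] P₀).2 y|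
          ≤ lt^b * E := by
      intro j hj y
      rw [hQ1]
      simp only
      rw [pdIter_const_mul 0 j (contDiff_pdm hh 0 b) (lt^b * (B/2)), pdIter_zero 0 j]
      have e1 : (pd 0)^[j] (pdm 0 b (fun y => g y * pd 1 g y))
          = pdm j b (fun y => g y * pd 1 g y) := by
        rw [pdm, pdm]
        rfl
      rw [e1]
      have hb := hhb j b (by omega) y
      have habs : |lt^b * (B/2)| = lt^b * (B/2) := abs_of_nonneg (by positivity)
      calc |lt^b * (B/2) * pdm j b (fun y => g y * pd 1 g y) y| + |(0:ℝ)|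
          = lt^b * (B/2) * |pdm j b (fun y => g y * pd 1 g y) y| := by
            rw [abs_mul, habs, abs_zero, add_zero]
        _ ≤ lt^b * (B/2) * (2^(k+1) * Mg^2) :=
            mul_le_mul_of_nonneg_left hb (by positivity)
        _ = lt^b * E := by rw [hEdef]; ring
    have hfin := dd0Iter_bound lt μ a ((dd1 lt μ)^[b] P₀) (lt^b * E)
      (hSmP₀.dd1Iter lt μ b) key x
    rwa [abs_of_pos hlt0, abs_of_pos hμ0] at hfin
  have master : ∀ a b, a + b ≤ k+1 → ∀ x,
      |pdm a b (shp lt μ P₀) x| ≤ 3^(k+1) * z^(a+b) * E := by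
    intro a b hab x
    rw [pdm_shp hSmP₀ lt μ a b]
    refine (shp_abs_le lt μ _ x).trans ?_
    refine (pairbd a b hab (lt • x)).trans ?_
    have h1 : (lt + μ)^a ≤ (3*z)^a := by
      apply pow_le_pow_left₀ (by positivity)
      rw [hμdef, hzdef]
      nlinarith
    have h2 : lt^b ≤ z^b := by
      apply pow_le_pow_left₀ hlt0.le
      rw [hzdef]
      nlinarith
    calc (lt + μ)^a * (lt^b * E)
        ≤ (3*z)^a * (z^b * E) :=
          mul_le_mul h1 (mul_le_mul_of_nonneg_right h2 hE) (by positivity) (by positivity)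
      _ = 3^a * z^(a+b) * E := by rw [mul_pow, pow_add]; ring
      _ ≤ 3^(k+1) * z^(a+b) * E := by
          have h3 : (3:ℝ)^a ≤ 3^(k+1) := pow_le_pow_right₀ (by norm_num) (by omega)
          have hzp : (0:ℝ) ≤ z^(a+b) := by positivity
          exact mul_le_mul_of_nonneg_right (mul_le_mul_of_nonneg_right h3 hzp) hE
  have hS' : (0:ℝ) ≤ 3^(k+1) * z^k * E := by positivity
  have ck_bound : cknorm k (shp lt μ P₀) ≤ ((k:ℝ)+1)^2 * (3^(k+1) * z^k * E) := by
    rw [cknorm]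
    have inner : ∀ a ∈ Finset.range (k+1),
        ∑ b ∈ Finset.range (k+1-a), supAbs (pdm a b (shp lt μ P₀))
          ≤ ((k:ℝ)+1) * (3^(k+1) * z^k * E) := by
      intro a ha
      have term : ∀ b ∈ Finset.range (k+1-a),
          supAbs (pdm a b (shp lt μ P₀)) ≤ 3^(k+1) * z^k * E := by
        intro b hb
        rw [Finset.mem_range] at ha hb
        refine supAbs_le hS' (fun x => ?_)
        refine (master a b (by omega) x).trans ?_
        have hzz : z^(a+b) ≤ z^k := pow_le_pow_right₀ hz1 (by omega)
        have h30 : (0:ℝ) ≤ (3:ℝ)^(k+1) := by positivity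
        exact mul_le_mul_of_nonneg_right (mul_le_mul_of_nonneg_left hzz h30) hE
      calc ∑ b ∈ Finset.range (k+1-a), supAbs (pdm a b (shp lt μ P₀))
          ≤ (Finset.range (k+1-a)).card • (3^(k+1) * z^k * E) :=
            Finset.sum_le_card_nsmul _ _ _ term
        _ = ((k+1-a : ℕ) : ℝ) * (3^(k+1) * z^k * E) := by
            rw [Finset.card_range, nsmul_eq_mul]
        _ ≤ ((k:ℝ)+1) * (3^(k+1) * z^k * E) := by
            have hcard : ((k+1-a : ℕ) : ℝ) ≤ (k:ℝ)+1 := by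
              have : (k+1-a : ℕ) ≤ k+1 := by omega
              exact_mod_cast this
            nlinarith
    calc ∑ a ∈ Finset.range (k+1), ∑ b ∈ Finset.range (k+1-a), supAbs (pdm a b (shp lt μ P₀))
        ≤ (Finset.range (k+1)).card • (((k:ℝ)+1) * (3^(k+1) * z^k * E)) :=
          Finset.sum_le_card_nsmul _ _ _ inner
      _ = ((k:ℝ)+1) * (((k:ℝ)+1) * (3^(k+1) * z^k * E)) := by
          rw [Finset.card_range, nsmul_eq_mul]
          norm_num
      _ = ((k:ℝ)+1)^2 * (3^(k+1) * z^k * E) := by ring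
  have hol_bound : ∀ a, a ≤ k → holderSemi α (pdm a (k-a) (shp lt μ P₀))
      ≤ 2 * 3^(k+1) * E * z^((k:ℝ)+α) := by
    intro a ha
    set b := k - a with hbdef
    have hab : a + b = k := by omega
    set fa := pdm a b (shp lt μ P₀) with hfadef
    have hfa_shape : fa = shp lt μ ((dd0 lt μ)^[a] ((dd1 lt μ)^[b] P₀)) :=
      pdm_shp hSmP₀ lt μ a b
    have hfa_smooth : ContDiff ℝ (⊤:ℕ∞) fa := by
      rw [hfa_shape]
      exact sm_shp ((hSmP₀.dd1Iter lt μ b).dd0Iter lt μ a) lt μ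
    have hSb : ∀ x, |fa x| ≤ 3^(k+1) * z^k * E := by
      intro x
      refine (master a b (by omega) x).trans ?_
      rw [hab]
    have hLb : ∀ x, |pd 0 fa x| + |pd 1 fa x| ≤ 2 * (3^(k+1) * z^(k+1) * E) := by
      intro x
      have b0 : |pd 0 fa x| ≤ 3^(k+1) * z^(k+1) * E := by
        rw [hfadef, pd0_pdm]
        exact (master (a+1) b (by omega) x).trans (by rw [show a+1+b = k+1 by omega])
      have b1 : |pd 1 fa x| ≤ 3^(k+1) * z^(k+1) * E := by
        have e : pd 1 fa = pdm a (b+1) (shp lt μ P₀) := by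
          rw [hfa_shape, pd1_shp ((hSmP₀.dd1Iter lt μ b).dd0Iter lt μ a) lt μ,
            dd1_dd0Iter (hSmP₀.dd1Iter lt μ b) lt μ a,
            pdm_shp hSmP₀ lt μ a (b+1)]
          congr 1
          rw [Function.iterate_succ_apply']
        rw [e]
        exact (master a (b+1) (by omega) x).trans (by rw [show a+(b+1) = k+1 by omega])
      linarith
    have hlip : ∀ x y, |fa x - fa y| ≤ (2 * (3^(k+1) * z^(k+1) * E)) * en (x - y) :=
      lipschitz_bound (cd_diff hfa_smooth) hLb
    have hhs := holderSemi_le hS' (by positivity) hα0 hα1.le hSb hlip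
    refine hhs.trans ?_
    have key : (2 * (3^(k+1) * z^k * E)) ^ (1-α) * (2 * (3^(k+1) * z^(k+1) * E)) ^ α
        = (2 * 3^(k+1) * E) * z^((k:ℝ)+α) := by
      have hri := rpow_interp_eq (w := 2 * 3^(k+1) * E) (z := z) (by positivity) hz0 k (α := α)
      calc (2 * (3^(k+1) * z^k * E)) ^ (1-α) * (2 * (3^(k+1) * z^(k+1) * E)) ^ α
          = ((2*3^(k+1)*E) * z^k) ^ (1-α) * ((2*3^(k+1)*E) * z^(k+1)) ^ α := by
            ring_nf
        _ = (2*3^(k+1)*E) * z^((k:ℝ)+α) := hri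
    rw [key]
  rw [hFeq, ckanorm]
  have hol_sum : ∑ a ∈ Finset.range (k+1), holderSemi α (pdm a (k-a) (shp lt μ P₀))
      ≤ ((k:ℝ)+1) * (2 * 3^(k+1) * E * z^((k:ℝ)+α)) := by
    calc ∑ a ∈ Finset.range (k+1), holderSemi α (pdm a (k-a) (shp lt μ P₀))
        ≤ (Finset.range (k+1)).card • (2 * 3^(k+1) * E * z^((k:ℝ)+α)) := by
          refine Finset.sum_le_card_nsmul _ _ _ (fun a ha => ?_)
          exact hol_bound a (by have := Finset.mem_range.1 ha; omega)
      _ = ((k:ℝ)+1) * (2 * 3^(k+1) * E * z^((k:ℝ)+α)) := by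
          rw [Finset.card_range, nsmul_eq_mul]
          norm_num
  have zle : z^k ≤ z^((k:ℝ)+α) := by
    rw [← Real.rpow_natCast z k]
    exact Real.rpow_le_rpow_of_exponent_le hz1 (by linarith)
  have hzα : (0:ℝ) ≤ z^((k:ℝ)+α) := Real.rpow_nonneg hz0.le _
  have Bz : B * z^((k:ℝ)+α) = K⁻¹^2 * lt^((k:ℝ)+α+3-2*s) * Nt^((k:ℝ)+α-2*s) := by
    have l1 : lt^((k:ℝ)+α+3-2*s) = lt^(3-2*s) * lt^((k:ℝ)+α) := by
      rw [← Real.rpow_add hlt0]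
      congr 1
      ring
    have l2 : Nt^((k:ℝ)+α-2*s) = Nt^(-(2*s)) * Nt^((k:ℝ)+α) := by
      rw [← Real.rpow_add hNt0]
      congr 1
      ring
    rw [hBdef, hzdef, Real.mul_rpow hlt0.le hNt0.le, l1, l2]
    ring
  have hEle : E ≤ 2^(k+1) * Mg^2 * B := by
    rw [hEdef]
    have h2k : (0:ℝ) ≤ 2^(k+1) * Mg^2 := by positivity
    nlinarith [hB.le, h2k]
  calc cknorm k (shp lt μ P₀)
        + ∑ a ∈ Finset.range (k+1), holderSemi α (pdm a (k-a) (shp lt μ P₀))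
      ≤ ((k:ℝ)+1)^2 * (3^(k+1) * z^k * E)
        + ((k:ℝ)+1) * (2 * 3^(k+1) * E * z^((k:ℝ)+α)) := add_le_add ck_bound hol_sum
    _ ≤ ((k:ℝ)+1)^2 * (3^(k+1) * z^((k:ℝ)+α) * E)
        + ((k:ℝ)+1) * (2 * 3^(k+1) * E * z^((k:ℝ)+α)) := by
        have h30 : (0:ℝ) ≤ 3^(k+1) := by positivity
        have hk0 : (0:ℝ) ≤ ((k:ℝ)+1)^2 := by positivity
        nlinarith [mul_le_mul_of_nonneg_left (mul_le_mul_of_nonneg_right zle hE) h30]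
    _ = (((k:ℝ)+1)^2 + 2*((k:ℝ)+1)) * 3^(k+1) * E * z^((k:ℝ)+α) := by ring
    _ ≤ (((k:ℝ)+1)^2 + 2*((k:ℝ)+1)) * 3^(k+1) * (2^(k+1) * Mg^2 * B) * z^((k:ℝ)+α) := by
        have hc0 : (0:ℝ) ≤ (((k:ℝ)+1)^2 + 2*((k:ℝ)+1)) * 3^(k+1) := by positivity
        nlinarith [mul_le_mul_of_nonneg_left hEle hc0,
          mul_le_mul_of_nonneg_right (mul_le_mul_of_nonneg_left hEle hc0) hzα]
    _ = ((((k:ℝ)+1)^2 + 2*((k:ℝ)+1)) * 3^(k+1) * 2^(k+1)) * Mg^2 * (B * z^((k:ℝ)+α)) := by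
        ring
    _ = _ := by rw [Bz]; ring


end SQG
end
end
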